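/- arXiv:1503.01575 — 3 statements merged into one kernel-verified Lean document; each statement's English description precedes it below -/
import Mathlib

section
/- Let H be an n×n Hermitian matrix, a a real number with a > 0, J the n×n all-ones matrix, and M = H + aJ. Let τ_1 < ⋯ < τ_r be the distinct main eigenvalues of H and μ_1 < ⋯ < μ_r the distinct main eigenvalues of M (there are equally many). Then the strict interlacing τ_1 < μ_1 < τ_2 < μ_2 < ⋯ < τ_r < μ_r holds. -/
open Matrix
open scoped Classical

noncomputable def eigSp {V : Type*} [Fintype V] [DecidableEq V]
    (H : Matrix V V ℂ) (μ : ℝ) : Submodule ℂ (EuclideanSpace ℂ V) :=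
  LinearMap.ker (Matrix.toEuclideanLin H - (μ : ℂ) • LinearMap.id)

noncomputable def mainAngle {V : Type*} [Fintype V] [DecidableEq V]
    (H : Matrix V V ℂ) (μ : ℝ) : ℝ :=
  (1 / Real.sqrt (Fintype.card V)) *
    ‖(Submodule.orthogonalProjectionOnto (eigSp H μ) (WithLp.toLp 2 (fun _ => 1)) : EuclideanSpace ℂ V)‖

noncomputable def eigMult {V : Type*} [Fintype V] [DecidableEq V]
    (H : Matrix V V ℂ) (μ : ℝ) : ℕ :=
  Module.finrank ℂ (eigSp H μ)

/-- `A` is the adjacency matrix of a tournament: a (0,1)-matrix with `A + Aᵀ = J - I`. -/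
def IsTournament {V : Type*} [Fintype V] [DecidableEq V] (A : Matrix V V ℂ) : Prop :=
  (∀ i j, A i j = 0 ∨ A i j = 1) ∧
    A + Aᵀ = Matrix.of (fun _ _ => (1 : ℂ)) - 1

/-- `φ` is a representation of the tournament with adjacency matrix `A` in `Ω(d)`,
with angle `α` (Im α > 0). -/
def IsRepresentation {n d : ℕ} (A : Matrix (Fin n) (Fin n) ℂ) (α : ℂ)
    (φ : Fin n → EuclideanSpace ℂ (Fin d)) : Prop :=
  0 < α.im ∧ (∀ x, ‖φ x‖ = 1) ∧
    ∀ x y : Fin n, x ≠ y →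
      (A x y = 1 → (inner ℂ (φ x) (φ y) : ℂ) = α) ∧
      (A y x = 1 → (inner ℂ (φ x) (φ y) : ℂ) = (starRingEnd ℂ) α)

def Representable {n : ℕ} (A : Matrix (Fin n) (Fin n) ℂ) (d : ℕ) : Prop :=
  ∃ (α : ℂ) (φ : Fin n → EuclideanSpace ℂ (Fin d)), IsRepresentation A α φ

noncomputable def RepDim {n : ℕ} (A : Matrix (Fin n) (Fin n) ℂ) : ℕ :=
  sInf {d | Representable A d}

/-- doubly regular tournament -/
def IsDoublyRegular {V : Type*} [Fintype V] [DecidableEq V] (A : Matrix V V ℂ) : Prop :=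
  IsTournament A ∧
    A *ᵥ (fun _ => 1) = (fun _ => ((Fintype.card V : ℂ) - 1) / 2) ∧
    A * Aᵀ = (((Fintype.card V : ℂ) + 1) / 4) • 1 +
      (((Fintype.card V : ℂ) - 3) / 4) • Matrix.of (fun _ _ => (1 : ℂ))

/-- skew Hadamard matrix -/
def IsSkewHadamard {V : Type*} [Fintype V] [DecidableEq V] (H : Matrix V V ℂ) : Prop :=
  (∀ i j, H i j = 1 ∨ H i j = -1) ∧
    H + Hᵀ = (2 : ℂ) • 1 ∧ H * Hᵀ = (Fintype.card V : ℂ) • 1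

/-- 2-code -/
def IsTwoCode {d : ℕ} (X : Finset (EuclideanSpace ℂ (Fin d))) (α : ℂ) : Prop :=
  α.im ≠ 0 ∧ (∀ x ∈ X, ‖x‖ = 1) ∧
    {z : ℂ | ∃ x ∈ X, ∃ y ∈ X, x ≠ y ∧ (inner ℂ x y : ℂ) = z} = {α, (starRingEnd ℂ) α}

/-- adjacency matrix of a 2-code -/
noncomputable def codeAdj {d : ℕ} (X : Finset (EuclideanSpace ℂ (Fin d))) (α : ℂ) :
    Matrix {x // x ∈ X} {x // x ∈ X} ℂ :=
  Matrix.of fun x y =>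
    if (x : EuclideanSpace ℂ (Fin d)) ≠ (y : EuclideanSpace ℂ (Fin d)) ∧
        (inner ℂ (x : EuclideanSpace ℂ (Fin d)) (y : EuclideanSpace ℂ (Fin d)) : ℂ) = α
    then 1 else 0


lemma mem_eigSp {V : Type*} [Fintype V] [DecidableEq V]
    {H : Matrix V V ℂ} {t : ℝ} {v : EuclideanSpace ℂ V} :
    v ∈ eigSp H t ↔ Matrix.toEuclideanLin H v = (t : ℂ) • v := by
  simp [eigSp, LinearMap.mem_ker, sub_eq_zero]

/-- if `a > 0`, the distinct main eigenvalues of `H` and of `M = H + a J`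
strictly interlace as `τ 1 < μ 1 < τ 2 < μ 2 < ⋯ < τ r < μ r`. -/
theorem main_eigenvalue_interlacing_pos {n r : ℕ} (H : Matrix (Fin n) (Fin n) ℂ)
    (hH : H.IsHermitian) (a : ℝ) (ha : 0 < a) (M : Matrix (Fin n) (Fin n) ℂ)
    (hM : M = H + (a : ℂ) • Matrix.of (fun _ _ => (1 : ℂ)))
    (τ : Fin r → ℝ) (hτ : StrictMono τ)
    (hmainH : ∀ t : ℝ, mainAngle H t ≠ 0 ↔ ∃ i, τ i = t)
    (μ : Fin r → ℝ) (hμ : StrictMono μ)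
    (hmainM : ∀ t : ℝ, mainAngle M t ≠ 0 ↔ ∃ i, μ i = t) :
    (∀ i : Fin r, τ i < μ i) ∧
      ∀ (i : Fin r) (h : (i : ℕ) + 1 < r), μ i < τ ⟨(i : ℕ) + 1, h⟩ := by
  rcases Nat.eq_zero_or_pos r with hr0 | hr
  · subst hr0
    exact ⟨fun i => i.elim0, fun i => i.elim0⟩
  set T := Matrix.toEuclideanLin H with hTdef
  have hTsym : T.IsSymmetric := Matrix.isHermitian_iff_isSymmetric.mp hH
  set jv : EuclideanSpace ℂ (Fin n) := (WithLp.equiv 2 (Fin n → ℂ)).symm (fun _ => 1) with hjvdef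
  have hang0 : mainAngle M (μ ⟨0, hr⟩) ≠ 0 := (hmainM _).mpr ⟨⟨0, hr⟩, rfl⟩
  have hfac : (1 / Real.sqrt (Fintype.card (Fin n)) : ℝ) ≠ 0 := by
    intro h
    apply hang0
    show (1 / Real.sqrt (Fintype.card (Fin n))) * _ = 0
    rw [h, zero_mul]
  have hproj_iff : ∀ (A : Matrix (Fin n) (Fin n) ℂ) (t : ℝ),
      mainAngle A t ≠ 0 ↔
        (Submodule.orthogonalProjectionOnto (eigSp A t) jv : EuclideanSpace ℂ (Fin n)) ≠ 0 := by
    intro A t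
    have hrfl : mainAngle A t
        = (1 / Real.sqrt (Fintype.card (Fin n)))
          * ‖(Submodule.orthogonalProjectionOnto (eigSp A t) jv : EuclideanSpace ℂ (Fin n))‖ := rfl
    rw [hrfl]
    constructor
    · intro h hz
      rw [hz] at h
      simp at h
    · intro h
      exact mul_ne_zero hfac (norm_ne_zero_iff.mpr h)
  have hprojinner : ∀ (K : Submodule ℂ (EuclideanSpace ℂ (Fin n))),
      (inner ℂ ((Submodule.orthogonalProjectionOnto K jv : EuclideanSpace ℂ (Fin n))) jv : ℂ)
        = ((‖(Submodule.orthogonalProjectionOnto K jv : EuclideanSpace ℂ (Fin n))‖ ^ 2 : ℝ) : ℂ) := by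
    intro K
    set w0 := (Submodule.orthogonalProjectionOnto K jv : EuclideanSpace ℂ (Fin n)) with hw0
    have h1 : jv - w0 ∈ Kᗮ := Submodule.sub_starProjection_mem_orthogonal jv
    have h2 : (inner ℂ w0 (jv - w0) : ℂ) = 0 := h1 w0 (SetLike.coe_mem _)
    calc (inner ℂ w0 jv : ℂ) = inner ℂ w0 (jv - w0) + inner ℂ w0 w0 := by
          rw [← inner_add_right, sub_add_cancel]
      _ = ((‖w0‖ ^ 2 : ℝ) : ℂ) := by
          rw [h2, zero_add, inner_self_eq_norm_sq_to_K]
          norm_cast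
  have horth : ∀ (s t : ℝ), s ≠ t → ∀ x ∈ eigSp H s, ∀ y ∈ eigSp H t,
      (inner ℂ x y : ℂ) = 0 := by
    intro s t hst x hx y hy
    have hst' : (s : ℂ) ≠ (t : ℂ) := by exact_mod_cast hst
    have hx' : x ∈ Module.End.eigenspace T (s : ℂ) :=
      Module.End.mem_eigenspace_iff.mpr (mem_eigSp.mp hx)
    have hy' : y ∈ Module.End.eigenspace T (t : ℂ) :=
      Module.End.mem_eigenspace_iff.mpr (mem_eigSp.mp hy)
    simpa using hTsym.orthogonalFamily_eigenspaces hst' ⟨x, hx'⟩ ⟨y, hy'⟩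
  set w : Fin r → EuclideanSpace ℂ (Fin n) :=
    fun i => (Submodule.orthogonalProjectionOnto (eigSp H (τ i)) jv : EuclideanSpace ℂ (Fin n)) with hwdef
  have hwmem : ∀ i, w i ∈ eigSp H (τ i) := fun i => SetLike.coe_mem _
  have hwne : ∀ i, w i ≠ 0 := fun i => (hproj_iff H (τ i)).mp ((hmainH (τ i)).mpr ⟨i, rfl⟩)
  set c : Fin r → ℝ := fun i => ‖w i‖ ^ 2 with hcdef
  have hcpos : ∀ i, 0 < c i := fun i => pow_pos (norm_pos_iff.mpr (hwne i)) 2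
  have hwj : ∀ i, (inner ℂ (w i) jv : ℂ) = ((c i : ℝ) : ℂ) := fun i => hprojinner _
  -- the all-ones vector is the sum of its projections onto the main eigenspaces
  have hjsum : jv = ∑ i, w i := by
    have hu : ∀ (μ' : ℂ) (x : EuclideanSpace ℂ (Fin n)), x ∈ Module.End.eigenspace T μ' →
        (inner ℂ x (jv - ∑ i, w i) : ℂ) = 0 := by
      intro μ' x hx
      by_cases hx0 : x = 0
      · simp [hx0]
      have hre : μ' = ((μ'.re : ℝ) : ℂ) := by
        have h := hTsym.conj_eigenvalue_eq_self
          (Module.End.hasEigenvalue_of_hasEigenvector ⟨hx, hx0⟩)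
        rw [Complex.conj_eq_iff_re] at h
        exact h.symm
      have hxe : x ∈ eigSp H μ'.re := by
        rw [mem_eigSp]
        have h := Module.End.mem_eigenspace_iff.mp hx
        rw [hre] at h
        exact h
      rw [inner_sub_right, inner_sum]
      by_cases hmain : ∃ i, τ i = μ'.re
      · obtain ⟨i, hi⟩ := hmain
        rw [← hi] at hxe
        have h2 : jv - w i ∈ (eigSp H (τ i))ᗮ := Submodule.sub_starProjection_mem_orthogonal jv
        have h3 : (inner ℂ x (jv - w i) : ℂ) = 0 := h2 x hxe
        have h1 : (inner ℂ x jv : ℂ) = inner ℂ x (w i) := by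
          calc (inner ℂ x jv : ℂ) = inner ℂ x (jv - w i) + inner ℂ x (w i) := by
                rw [← inner_add_right, sub_add_cancel]
            _ = inner ℂ x (w i) := by rw [h3, zero_add]
        have h4 : ∀ k ∈ Finset.univ, k ≠ i → (inner ℂ x (w k) : ℂ) = 0 := fun k _ hk =>
          horth (τ i) (τ k) (fun h => hk (hτ.injective h.symm)) x hxe (w k) (hwmem k)
        rw [Finset.sum_eq_single i h4 (by simp), h1, sub_self]
      · have hzero : ¬ mainAngle H μ'.re ≠ 0 := fun hne => hmain ((hmainH μ'.re).mp hne)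
        have hproj0 :
            (Submodule.orthogonalProjectionOnto (eigSp H μ'.re) jv : EuclideanSpace ℂ (Fin n)) = 0 := by
          by_contra hne
          exact hzero ((hproj_iff H μ'.re).mpr hne)
        have hjorth : jv ∈ (eigSp H μ'.re)ᗮ := by
          have h : jv - (Submodule.orthogonalProjectionOnto (eigSp H μ'.re) jv : EuclideanSpace ℂ (Fin n)) ∈ (eigSp H μ'.re)ᗮ :=
            Submodule.sub_starProjection_mem_orthogonal (K := eigSp H μ'.re) jv
          rwa [hproj0, sub_zero] at h
        have h1 : (inner ℂ x jv : ℂ) = 0 := hjorth x hxe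
        have h4 : ∀ k, (inner ℂ x (w k) : ℂ) = 0 := fun k =>
          horth μ'.re (τ k) (fun h => hmain ⟨k, h.symm⟩) x hxe (w k) (hwmem k)
        rw [h1, Finset.sum_eq_zero (fun k _ => h4 k), sub_self]
    have hu2 : (jv - ∑ i, w i) ∈ (⨆ μ' : ℂ, Module.End.eigenspace T μ')ᗮ := by
      rw [Submodule.mem_orthogonal]
      intro x hx
      refine Submodule.iSup_induction
        (motive := fun y => (inner ℂ y (jv - ∑ i, w i) : ℂ) = 0) _ hx (fun μ' x hx => hu μ' x hx)
        (by simp) ?_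
      intro x y hx hy
      rw [inner_add_left, hx, hy, add_zero]
    rw [hTsym.orthogonalComplement_iSup_eigenspaces_eq_bot] at hu2
    have : jv - ∑ i, w i = 0 := by simpa using hu2
    exact sub_eq_zero.mp this
  -- action of M
  have hMop : ∀ v : EuclideanSpace ℂ (Fin n),
      Matrix.toEuclideanLin M v = T v + ((a : ℂ) * (inner ℂ jv v : ℂ)) • jv := by
    intro v
    ext i
    rw [hM]
    simp [Matrix.toEuclideanLin_apply, Matrix.add_mulVec, Matrix.smul_mulVec,
      Matrix.mulVec, dotProduct, PiLp.inner_apply, PiLp.smul_apply, PiLp.add_apply,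
      smul_eq_mul, hjvdef, hTdef, Finset.mul_sum]
  -- the key identity for each main eigenvalue of M
  have key : ∀ k : Fin r, (∀ i, μ k ≠ τ i) ∧ ∑ i, a * c i / (μ k - τ i) = 1 := by
    intro k
    set z : EuclideanSpace ℂ (Fin n) :=
      (Submodule.orthogonalProjectionOnto (eigSp M (μ k)) jv : EuclideanSpace ℂ (Fin n)) with hzdef
    have hzne : z ≠ 0 := (hproj_iff M (μ k)).mp ((hmainM _).mpr ⟨k, rfl⟩)
    have hzmem : Matrix.toEuclideanLin M z = ((μ k : ℝ) : ℂ) • z :=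
      mem_eigSp.mp (SetLike.coe_mem _)
    have hzj : (inner ℂ z jv : ℂ) = ((‖z‖ ^ 2 : ℝ) : ℂ) := hprojinner _
    have hjz : (inner ℂ jv z : ℂ) = ((‖z‖ ^ 2 : ℝ) : ℂ) := by
      rw [← inner_conj_symm jv z, hzj, Complex.conj_ofReal]
    set β : ℂ := (a : ℂ) * ((‖z‖ ^ 2 : ℝ) : ℂ) with hβdef
    have hβne : β ≠ 0 := by
      apply mul_ne_zero
      · exact_mod_cast ha.ne'
      · exact_mod_cast (pow_pos (norm_pos_iff.mpr hzne) 2).ne'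
    have h := (hMop z).symm.trans hzmem
    rw [hjz] at h
    have hTz : T z = ((μ k : ℝ) : ℂ) • z - ((a : ℂ) * ((‖z‖ ^ 2 : ℝ) : ℂ)) • jv :=
      eq_sub_of_add_eq h
    have hkey : ∀ i, (((μ k : ℝ) : ℂ) - ((τ i : ℝ) : ℂ)) * (inner ℂ (w i) z : ℂ)
        = ((a : ℂ) * ((‖z‖ ^ 2 : ℝ) : ℂ)) * ((c i : ℝ) : ℂ) := by
      intro i
      have h1 : (inner ℂ (T (w i)) z : ℂ) = inner ℂ (w i) (T z) := hTsym (w i) z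
      have h2 : T (w i) = ((τ i : ℝ) : ℂ) • w i := mem_eigSp.mp (hwmem i)
      rw [h2, hTz, inner_smul_left, inner_sub_right, inner_smul_right, inner_smul_right,
        Complex.conj_ofReal, hwj i] at h1
      linear_combination -h1
    have hβne : ((a : ℂ) * ((‖z‖ ^ 2 : ℝ) : ℂ)) ≠ 0 := by
      apply mul_ne_zero
      · exact_mod_cast ha.ne'
      · exact_mod_cast (pow_pos (norm_pos_iff.mpr hzne) 2).ne'
    have hμτ : ∀ i, μ k ≠ τ i := by
      intro i he
      have hk := hkey i
      rw [he, sub_self, zero_mul] at hk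
      exact mul_ne_zero hβne (by exact_mod_cast (hcpos i).ne') hk.symm
    have hsubne : ∀ i, (((μ k : ℝ) : ℂ) - ((τ i : ℝ) : ℂ)) ≠ 0 := by
      intro i hi
      exact hμτ i (by exact_mod_cast sub_eq_zero.mp hi)
    have hwz : ∀ i, (inner ℂ (w i) z : ℂ)
        = ((a : ℂ) * ((‖z‖ ^ 2 : ℝ) : ℂ)) * ((c i : ℝ) : ℂ)
          / (((μ k : ℝ) : ℂ) - ((τ i : ℝ) : ℂ)) := by
      intro i
      rw [eq_div_iff (hsubne i)]
      linear_combination hkey i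
    have hsum0 : ((‖z‖ ^ 2 : ℝ) : ℂ) = ∑ i, (inner ℂ (w i) z : ℂ) := by
      rw [← hjz]
      conv_lhs => rw [hjsum]
      exact sum_inner _ _ _
    have hsum1 : ((‖z‖ ^ 2 : ℝ) : ℂ)
        = ((‖z‖ ^ 2 : ℝ) : ℂ) * ((∑ i, a * c i / (μ k - τ i) : ℝ) : ℂ) := by
      calc ((‖z‖ ^ 2 : ℝ) : ℂ) = ∑ i, (inner ℂ (w i) z : ℂ) := hsum0
        _ = ∑ i, ((‖z‖ ^ 2 * (a * c i / (μ k - τ i)) : ℝ) : ℂ) := by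
            refine Finset.sum_congr rfl fun i _ => ?_
            rw [hwz i]
            push_cast
            ring
        _ = ((‖z‖ ^ 2 : ℝ) : ℂ) * ((∑ i, a * c i / (μ k - τ i) : ℝ) : ℂ) := by
            push_cast
            rw [Finset.mul_sum]
    have hz2 : ((‖z‖ ^ 2 : ℝ) : ℂ) ≠ 0 := by
      exact_mod_cast (pow_pos (norm_pos_iff.mpr hzne) 2).ne'
    have hfin : ((∑ i, a * c i / (μ k - τ i) : ℝ) : ℂ) = 1 :=
      mul_left_cancel₀ hz2 (hsum1.symm.trans (mul_one _).symm)
    exact ⟨hμτ, by exact_mod_cast hfin⟩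
  -- endgame: real analysis of the rational function
  have F1 : ∀ k, ∑ i, a * c i / (μ k - τ i) = 1 := fun k => (key k).2
  have hμτ : ∀ k i, μ k ≠ τ i := fun k => (key k).1
  have hlow : ∀ k, τ ⟨0, hr⟩ < μ k := by
    intro k
    by_contra hle
    push_neg at hle
    have hlt : ∀ i, μ k < τ i := fun i =>
      lt_of_le_of_ne (hle.trans (hτ.monotone (by exact Fin.mk_le_of_le_val (Nat.zero_le _))))
        (hμτ k i)
    have hneg : ∑ i, a * c i / (μ k - τ i) < ∑ _i : Fin r, (0 : ℝ) := by
      refine Finset.sum_lt_sum_of_nonempty ⟨⟨0, hr⟩, Finset.mem_univ _⟩ fun i _ => ?_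
      exact div_neg_of_pos_of_neg (mul_pos ha (hcpos i)) (sub_neg.mpr (hlt i))
    rw [F1 k] at hneg
    simp at hneg
    linarith
  set idx : Fin r → Fin r :=
    fun k => (Finset.univ.filter (fun i => τ i < μ k)).max'
      ⟨⟨0, hr⟩, Finset.mem_filter.mpr ⟨Finset.mem_univ _, hlow k⟩⟩ with hidxdef
  have hidx1 : ∀ k, τ (idx k) < μ k := by
    intro k
    have h := Finset.max'_mem (Finset.univ.filter (fun i => τ i < μ k))
      ⟨⟨0, hr⟩, Finset.mem_filter.mpr ⟨Finset.mem_univ _, hlow k⟩⟩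
    exact (Finset.mem_filter.mp h).2
  have hidx2 : ∀ k i, τ i < μ k ↔ i ≤ idx k := by
    intro k i
    constructor
    · intro h
      exact Finset.le_max' _ i (Finset.mem_filter.mpr ⟨Finset.mem_univ _, h⟩)
    · intro h
      exact lt_of_le_of_lt (hτ.monotone h) (hidx1 k)
  have hidxmono : StrictMono idx := by
    intro k l hkl
    have hle : idx k ≤ idx l := (hidx2 l (idx k)).mp ((hidx1 k).trans (hμ hkl))
    rcases lt_or_eq_of_le hle with hlt | heq
    · exact hlt
    exfalso
    have hiff : ∀ m, τ m < μ k ↔ τ m < μ l := by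
      intro m
      rw [hidx2 k m, hidx2 l m, heq]
    have hterm : ∀ m : Fin r, a * c m / (μ l - τ m) < a * c m / (μ k - τ m) := by
      intro m
      have hpos : 0 < a * c m := mul_pos ha (hcpos m)
      by_cases hm : τ m < μ k
      · exact div_lt_div_of_pos_left hpos (sub_pos.mpr hm)
          (by have := hμ hkl; linarith)
      · have h1 : μ k < τ m := lt_of_le_of_ne (not_lt.mp hm) (hμτ k m)
        have h2 : μ l < τ m :=
          lt_of_le_of_ne (not_lt.mp (fun hh => hm ((hiff m).mpr hh))) (hμτ l m)
        have hxy : μ k - τ m < μ l - τ m := by have := hμ hkl; linarith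
        have hy0 : μ l - τ m < 0 := by linarith
        have hd := one_div_lt_one_div_of_neg_of_lt hy0 hxy
        calc a * c m / (μ l - τ m) = (a * c m) * (1 / (μ l - τ m)) := by ring
          _ < (a * c m) * (1 / (μ k - τ m)) := mul_lt_mul_of_pos_left hd hpos
          _ = a * c m / (μ k - τ m) := by ring
    have hcontr : (1 : ℝ) < 1 := by
      calc (1 : ℝ) = ∑ m, a * c m / (μ l - τ m) := (F1 l).symm
        _ < ∑ m, a * c m / (μ k - τ m) :=
            Finset.sum_lt_sum_of_nonempty ⟨⟨0, hr⟩, Finset.mem_univ _⟩ fun m _ => hterm m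
        _ = 1 := F1 k
    exact lt_irrefl _ hcontr
  haveI : WellFoundedLT (Fin r) := inferInstance
  haveI : WellFoundedGT (Fin r) := inferInstance
  have hid1 : ∀ k, k ≤ idx k := fun k => hidxmono.le_apply
  have hid2 : ∀ k, idx k ≤ k := fun k => hidxmono.apply_le
  constructor
  · intro k
    exact lt_of_le_of_lt (hτ.monotone (hid1 k)) (hidx1 k)
  · intro k h
    have hnot : ¬ τ ⟨(k : ℕ) + 1, h⟩ < μ k := by
      intro hlt
      have hle' : (⟨(k : ℕ) + 1, h⟩ : Fin r) ≤ idx k := (hidx2 k _).mp hlt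
      have : ((k : ℕ) + 1) ≤ (k : ℕ) := le_trans hle' (hid2 k)
      omega
    exact lt_of_le_of_ne (not_lt.mp hnot) (hμτ k _)
end

section
/- Let d ≥ 3 be an integer and let A be the adjacency matrix of a tournament on n = 2d vertices whose Seidel matrix S = i(A − Aᵀ) has exactly the eigenvalues −θ, −φ, φ, θ with multiplicities d − 1, 1, 1, d − 1 respectively for some 0 < φ < θ, and whose smallest eigenvalue −θ is not a main eigenvalue. Then d is odd, and A is the adjacency matrix of the induced subtournament of a doubly regular tournament on 2d + 1 vertices obtained by deleting one vertex; that is, there exist a (2d+1)×(2d+1) adjacency matrix B of a doubly regular tournament and a vertex v such that the matrix obtained from B by deleting the row and column of v is permutationally similar to A. -/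
open Matrix
open scoped Classical

private lemma exists01 {m : ℕ} (f : Fin m → ℂ) (hf : ∀ a, f a = 0 ∨ f a = 1) :
    ∃ N : ℕ, ∑ a, f a = (N : ℂ) := by
  classical
  refine ⟨(Finset.univ.filter fun a => f a = 1).card, ?_⟩
  rw [← Finset.sum_boole]
  refine Finset.sum_congr rfl fun a _ => ?_
  rcases hf a with h | h <;> simp [h]

private lemma construct {d : ℕ} (hd : 3 ≤ d) (A : Matrix (Fin (2*d)) (Fin (2*d)) ℂ)
    (hA01 : ∀ i j, A i j = 0 ∨ A i j = 1)
    (hApair : ∀ x y : Fin (2*d), x ≠ y → A x y + A y x = 1)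
    (hAdiag : ∀ x, A x x = 0)
    (σ : Fin (2*d) → ℂ)
    (hσpm : ∀ x, σ x = 1 ∨ σ x = -1)
    (hσsum : ∑ x, σ x = 0)
    (hErow : ∀ x, ∑ u, (A x u - A u x) = -σ x)
    (hEσ : ∀ x, ∑ u, (A x u - A u x) * σ u = 1)
    (hEE : ∀ x y, x ≠ y → ∑ u, (A x u - A u x) * (A u y - A y u) = 1 + σ x * σ y)
    (hEEdiag : ∀ x, ∑ u, (A x u - A u x) * (A u x - A x u) = -(2*(d:ℂ) - 1)) :
    Odd d ∧ ∃ B : Matrix (Fin (2*d+1)) (Fin (2*d+1)) ℂ,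
      IsDoublyRegular B ∧ ∃ f : Fin (2*d) ↪ Fin (2*d+1), B.submatrix f f = A := by
  classical
  have hσsq : ∀ x, σ x * σ x = 1 := fun x => by rcases hσpm x with h | h <;> rw [h] <;> ring
  have hEpm : ∀ x y : Fin (2*d), x ≠ y → A x y - A y x = 1 ∨ A x y - A y x = -1 := by
    intro x y hxy
    have hp := hApair x y hxy
    rcases hA01 x y with h | h <;> rcases hA01 y x with h' | h' <;> rw [h, h'] at hp ⊢
    · exfalso; norm_num at hp
    · right; ring
    · left; ring
    · exfalso; norm_num at hp
  set EB : Matrix (Fin (2*d+1)) (Fin (2*d+1)) ℂ := Matrix.of (fun x y =>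
    if hx : x = Fin.last (2*d) then
      (if hy : y = Fin.last (2*d) then 0 else -σ (y.castPred hy))
    else
      (if hy : y = Fin.last (2*d) then σ (x.castPred hx) else
        A (x.castPred hx) (y.castPred hy) - A (y.castPred hy) (x.castPred hx))) with hEBdef
  have hlast : ∀ x : Fin (2*d), Fin.castSucc x ≠ Fin.last (2*d) :=
    fun x => (Fin.castSucc_lt_last x).ne
  have hEB1 : ∀ x y : Fin (2*d), EB x.castSucc y.castSucc = A x y - A y x := by
    intro x y; simp [hEBdef, hlast x, hlast y, Fin.castPred_castSucc]
  have hEB2 : ∀ x : Fin (2*d), EB x.castSucc (Fin.last (2*d)) = σ x := by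
    intro x; simp [hEBdef, hlast x, Fin.castPred_castSucc]
  have hEB3 : ∀ y : Fin (2*d), EB (Fin.last (2*d)) y.castSucc = -σ y := by
    intro y; simp [hEBdef, hlast y, Fin.castPred_castSucc]
  have hEB4 : EB (Fin.last (2*d)) (Fin.last (2*d)) = 0 := by simp [hEBdef]
  have hEBskew : ∀ x y, EB y x = -EB x y := by
    intro x y
    induction x using Fin.lastCases with
    | last =>
      induction y using Fin.lastCases with
      | last => rw [hEB4]; ring
      | cast y => rw [hEB2, hEB3]; ring
    | cast x =>
      induction y using Fin.lastCases with
      | last => rw [hEB3, hEB2]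
      | cast y => rw [hEB1, hEB1]; ring
  have hEBdiag : ∀ x, EB x x = 0 := by
    intro x
    induction x using Fin.lastCases with
    | last => exact hEB4
    | cast x => rw [hEB1]; ring
  have hEBpm : ∀ x y, x ≠ y → EB x y = 1 ∨ EB x y = -1 := by
    intro x y hxy
    induction x using Fin.lastCases with
    | last =>
      induction y using Fin.lastCases with
      | last => exact absurd rfl hxy
      | cast y =>
        rw [hEB3]
        rcases hσpm y with h | h <;> rw [h]
        · right; ring
        · left; ring
    | cast x =>
      induction y using Fin.lastCases with
      | last => rw [hEB2]; exact hσpm x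
      | cast y =>
        rw [hEB1]
        exact hEpm x y (fun h => hxy (by rw [h]))
  have hEBrow : ∀ x, ∑ u, EB x u = 0 := by
    intro x
    rw [Fin.sum_univ_castSucc]
    induction x using Fin.lastCases with
    | last =>
      rw [hEB4]
      simp only [hEB3]
      rw [Finset.sum_neg_distrib, hσsum]; ring
    | cast x =>
      simp only [hEB1, hEB2]
      rw [hErow x]; ring
  have hEBsq : ∀ x y, ∑ u, EB x u * EB u y = (if x = y then 1 - (2*(d:ℂ)+1) else 1) := by
    intro x y
    rw [Fin.sum_univ_castSucc]
    induction x using Fin.lastCases with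
    | last =>
      induction y using Fin.lastCases with
      | last =>
        rw [if_pos rfl, hEB4]
        simp only [hEB3, hEB2]
        have h1 : ∀ i : Fin (2*d), -σ i * σ i = -1 := fun i => by
          rw [neg_mul, hσsq i]
        rw [Finset.sum_congr rfl fun i _ => h1 i, Finset.sum_const, Finset.card_univ,
          Fintype.card_fin]
        push_cast; ring
      | cast y =>
        rw [if_neg (Ne.symm (hlast y)), hEB4]
        simp only [hEB3, hEB1]
        have h1 : ∀ i : Fin (2*d), -σ i * (A i y - A y i) = (A y i - A i y) * σ i :=
          fun i => by ring
        rw [Finset.sum_congr rfl fun i _ => h1 i, hEσ y]; ring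
    | cast x =>
      induction y using Fin.lastCases with
      | last =>
        rw [if_neg (hlast x), hEB4]
        simp only [hEB1, hEB2]
        rw [hEσ x]; ring
      | cast y =>
        simp only [hEB1, hEB2, hEB3]
        by_cases hxy : x = y
        · subst hxy
          rw [if_pos rfl, hEEdiag x]
          linear_combination -hσsq x
        · rw [if_neg (fun h => hxy (Fin.castSucc_inj.mp h)), hEE x y hxy]
          ring
  set B : Matrix (Fin (2*d+1)) (Fin (2*d+1)) ℂ := Matrix.of (fun x y =>
    (EB x y + 1 - if x = y then 1 else 0) / 2) with hBdef
  have hBapp : ∀ x y, B x y = (EB x y + 1 - if x = y then 1 else 0) / 2 := fun x y => rfl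
  have hB01 : ∀ x y, B x y = 0 ∨ B x y = 1 := by
    intro x y
    rw [hBapp]
    by_cases hxy : x = y
    · left; rw [if_pos hxy, hxy, hEBdiag]; ring
    · rw [if_neg hxy]
      rcases hEBpm x y hxy with h | h <;> rw [h]
      · right; ring
      · left; ring
  have hcard : (Fintype.card (Fin (2*d+1)) : ℂ) = 2*(d:ℂ) + 1 := by
    rw [Fintype.card_fin]; push_cast; ring
  have htourn : IsTournament B := by
    refine ⟨hB01, ?_⟩
    ext x y
    rw [Matrix.add_apply, Matrix.transpose_apply, hBapp, hBapp, Matrix.sub_apply,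
      Matrix.of_apply, Matrix.one_apply, hEBskew x y]
    by_cases hxy : x = y
    · simp only [if_pos hxy, if_pos hxy.symm]; ring
    · simp only [if_neg hxy, if_neg (show ¬ y = x from fun h => hxy h.symm)]; ring
  have hrow : B *ᵥ (fun _ => 1) = fun _ => ((Fintype.card (Fin (2*d+1)) : ℂ) - 1) / 2 := by
    funext x
    show ∑ y, B x y * 1 = _
    simp only [mul_one]
    rw [Finset.sum_congr rfl fun y _ => hBapp x y, ← Finset.sum_div, Finset.sum_sub_distrib,
      Finset.sum_add_distrib, hEBrow x, Finset.sum_const, Finset.card_univ, Fintype.card_fin,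
      Finset.sum_ite_eq, if_pos (Finset.mem_univ x)]
    push_cast; ring
  have hprod : B * Bᵀ = (((Fintype.card (Fin (2*d+1)) : ℂ) + 1) / 4) • 1 +
      (((Fintype.card (Fin (2*d+1)) : ℂ) - 3) / 4) • Matrix.of (fun _ _ => (1:ℂ)) := by
    ext x y
    rw [Matrix.mul_apply]
    have hterm : ∀ u, B x u * Bᵀ u y =
        ((EB x u * EB y u) + EB x u * (1 - if y = u then 1 else 0)
          + EB y u * (1 - if x = u then 1 else 0)
          + (1 - if x = u then 1 else 0) * (1 - if y = u then 1 else 0)) / 4 := by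
      intro u
      rw [Matrix.transpose_apply, hBapp, hBapp]
      ring
    rw [Finset.sum_congr rfl fun u _ => hterm u, ← Finset.sum_div,
      Finset.sum_add_distrib, Finset.sum_add_distrib, Finset.sum_add_distrib]
    have p1 : ∑ u, EB x u * EB y u = -(if x = y then 1 - (2*(d:ℂ)+1) else 1) := by
      have h1 : ∀ u, EB x u * EB y u = -(EB x u * EB u y) := fun u => by
        rw [hEBskew u y]; ring
      rw [Finset.sum_congr rfl fun u _ => h1 u, Finset.sum_neg_distrib, hEBsq x y]
    have p2 : ∑ u, EB x u * (1 - if y = u then 1 else 0) = -EB x y := by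
      have h1 : ∀ u, EB x u * (1 - if y = u then 1 else 0)
          = EB x u - (if y = u then EB x u else 0) := by
        intro u; by_cases h : y = u <;> simp [h]
      rw [Finset.sum_congr rfl fun u _ => h1 u, Finset.sum_sub_distrib, hEBrow x,
        Finset.sum_ite_eq, if_pos (Finset.mem_univ y)]
      ring
    have p3 : ∑ u, EB y u * (1 - if x = u then 1 else 0) = EB x y := by
      have h1 : ∀ u, EB y u * (1 - if x = u then 1 else 0)
          = EB y u - (if x = u then EB y u else 0) := by
        intro u; by_cases h : x = u <;> simp [h]
      rw [Finset.sum_congr rfl fun u _ => h1 u, Finset.sum_sub_distrib, hEBrow y,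
        Finset.sum_ite_eq, if_pos (Finset.mem_univ x), hEBskew x y]
      ring
    have p4 : ∑ u, (1 - if x = u then 1 else 0) * (1 - if y = u then 1 else 0)
        = (2*(d:ℂ)+1) - 1 - 1 + (if x = y then 1 else 0) := by
      have h1 : ∀ u : Fin (2*d+1), (1 - if x = u then 1 else 0) * (1 - if y = u then 1 else 0)
          = 1 - (if x = u then (1:ℂ) else 0) - (if y = u then 1 else 0)
            + (if x = u then (if y = u then (1:ℂ) else 0) else 0) := by
        intro u; by_cases h1 : x = u <;> by_cases h2 : y = u <;> simp [h1, h2]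
      rw [Finset.sum_congr rfl fun u _ => h1 u, Finset.sum_add_distrib,
        Finset.sum_sub_distrib, Finset.sum_sub_distrib, Finset.sum_const, Finset.card_univ,
        Fintype.card_fin, Finset.sum_ite_eq, Finset.sum_ite_eq, Finset.sum_ite_eq,
        if_pos (Finset.mem_univ x), if_pos (Finset.mem_univ y), if_pos (Finset.mem_univ x)]
      by_cases h : x = y
      · rw [if_pos h, if_pos h.symm]; push_cast; ring
      · rw [if_neg h, if_neg (fun hh => h hh.symm)]; push_cast; ring
    rw [p1, p2, p3, p4]
    rw [Matrix.add_apply, Matrix.smul_apply, Matrix.smul_apply, Matrix.one_apply,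
      Matrix.of_apply, hcard]
    by_cases h : x = y
    · simp only [if_pos h, smul_eq_mul]; push_cast; ring
    · simp only [if_neg h, smul_eq_mul]; push_cast; ring
  have hodd : Odd d := by
    have hab : (⟨0, by omega⟩ : Fin (2*d)).castSucc ≠ (⟨1, by omega⟩ : Fin (2*d)).castSucc := by
      simp [Fin.ext_iff]
    set a : Fin (2*d+1) := (⟨0, by omega⟩ : Fin (2*d)).castSucc
    set b : Fin (2*d+1) := (⟨1, by omega⟩ : Fin (2*d)).castSucc
    have hentry : (B * Bᵀ) a b = (2*(d:ℂ) - 2)/4 := by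
      rw [hprod, Matrix.add_apply, Matrix.smul_apply, Matrix.smul_apply, Matrix.one_apply,
        Matrix.of_apply, hcard, if_neg hab]
      simp only [smul_eq_mul]; push_cast; ring
    rw [Matrix.mul_apply] at hentry
    obtain ⟨N, hN⟩ := exists01 (fun u => B a u * Bᵀ u b) (by
      intro u
      show B a u * Bᵀ u b = 0 ∨ B a u * Bᵀ u b = 1
      rw [Matrix.transpose_apply]
      rcases hB01 a u with h | h <;> rcases hB01 b u with h' | h' <;> rw [h, h']
      · left; ring
      · left; ring
      · left; ring
      · right; ring)
    rw [hN] at hentry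
    have h4 : ((4*N : ℕ) : ℂ) = ((2*d - 2 : ℕ) : ℂ) := by
      have h2 : ((2*d - 2 : ℕ) : ℂ) = 2*(d:ℂ) - 2 := by
        push_cast [Nat.cast_sub (by omega : 2 ≤ 2*d)]; ring
      rw [h2]
      push_cast
      linear_combination 4 * hentry
    have h5 : 4*N = 2*d - 2 := Nat.cast_inj.mp h4
    exact ⟨N, by omega⟩
  refine ⟨hodd, B, ⟨htourn, hrow, hprod⟩, ⟨Fin.castSucc, Fin.castSucc_injective _⟩, ?_⟩
  ext x y
  rw [Matrix.submatrix_apply]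
  show B x.castSucc y.castSucc = A x y
  rw [hBapp]
  by_cases hxy : x = y
  · subst hxy; rw [if_pos rfl, hEB1, hAdiag]; ring
  · rw [if_neg (fun h => hxy (Fin.castSucc_inj.mp h)), hEB1]
    have hp := hApair x y hxy
    linear_combination (-1/2 : ℂ) * hp
private lemma mem_orth_of_proj_zero {m : ℕ} (Kk : Submodule ℂ (EuclideanSpace ℂ (Fin m)))
    (v : EuclideanSpace ℂ (Fin m))
    (h : (Submodule.orthogonalProjectionOnto Kk v : EuclideanSpace ℂ (Fin m)) = 0) :
    ∀ u ∈ Kk, (inner ℂ u v : ℂ) = 0 := by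
  have h2 : v ∈ Kkᗮ := by
    rw [← Submodule.orthogonalProjectionOnto_eq_zero_iff]
    exact_mod_cast h
  exact fun u hu => (Submodule.mem_orthogonal Kk v).mp h2 u hu

private lemma finrank_sup_orth {E : Type*} [NormedAddCommGroup E] [InnerProductSpace ℂ E]
    [FiniteDimensional ℂ E] (U W : Submodule ℂ E)
    (h : ∀ u ∈ U, ∀ w ∈ W, (inner ℂ u w : ℂ) = 0) :
    Module.finrank ℂ ↥(U ⊔ W) = Module.finrank ℂ U + Module.finrank ℂ W := by
  have hUW : U ⊓ W = ⊥ := by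
    refine (Submodule.eq_bot_iff _).mpr fun x hx => ?_
    exact inner_self_eq_zero.mp (h x hx.1 x hx.2)
  have h2 := Submodule.finrank_sup_add_finrank_inf_eq U W
  rw [hUW] at h2
  simpa using h2


set_option maxHeartbeats 1000000 in
/-- a tournament on `n = 2d` vertices (`d ≥ 3`) whose Seidel matrix has
exactly the eigenvalues `−θ, −φ, φ, θ` (`0 < φ < θ`) with multiplicities `d−1, 1, 1, d−1`
and whose smallest eigenvalue is not main, forces `d` odd, and the tournament is obtained
from a doubly regular tournament on `2d + 1` vertices by deleting a vertex (up to
permutational similarity, i.e. `A` is a principal submatrix of such a tournament along an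
injection). -/
theorem type_one_four_eigenvalues_from_doublyRegular {d : ℕ} (hd : 3 ≤ d)
    (A : Matrix (Fin (2 * d)) (Fin (2 * d)) ℂ) (hA : IsTournament A)
    (S : Matrix (Fin (2 * d)) (Fin (2 * d)) ℂ) (hS : S = Complex.I • (A - Aᵀ))
    (θ φ : ℝ) (hφ : 0 < φ) (hφθ : φ < θ)
    (heig : ∀ μ : ℝ, eigSp S μ ≠ ⊥ ↔ (μ = -θ ∨ μ = -φ ∨ μ = φ ∨ μ = θ))
    (hm1 : eigMult S (-θ) = d - 1) (hm2 : eigMult S (-φ) = 1)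
    (hm3 : eigMult S φ = 1) (hm4 : eigMult S θ = d - 1)
    (hβ1 : mainAngle S (-θ) = 0) :
    Odd d ∧ ∃ B : Matrix (Fin (2 * d + 1)) (Fin (2 * d + 1)) ℂ,
      IsDoublyRegular B ∧ ∃ f : Fin (2 * d) ↪ Fin (2 * d + 1), B.submatrix f f = A := by
  classical
  obtain ⟨hA01, hAJ⟩ := hA
  have hθ : 0 < θ := lt_trans hφ hφθ
  have hAconj : ∀ x y, (starRingEnd ℂ) (A x y) = A x y := by
    intro x y; rcases hA01 x y with h | h <;> rw [h] <;> simp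
  have hAJ' : ∀ x y, A x y + A y x = (if x = y then 0 else 1) := by
    intro x y
    have h := congrFun (congrFun hAJ x) y
    rw [Matrix.add_apply, Matrix.transpose_apply, Matrix.sub_apply, Matrix.of_apply,
      Matrix.one_apply] at h
    rw [h]
    by_cases hxy : x = y <;> simp [hxy]
  have hAdiag : ∀ x, A x x = 0 := by
    intro x
    have h := hAJ' x x
    rw [if_pos rfl] at h
    linear_combination h / 2
  have hApair : ∀ x y : Fin (2*d), x ≠ y → A x y + A y x = 1 := by
    intro x y hxy; have h := hAJ' x y; rwa [if_neg hxy] at h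
  have hSapp : ∀ x y, S x y = Complex.I * (A x y - A y x) := by
    intro x y
    rw [hS, Matrix.smul_apply, Matrix.sub_apply, Matrix.transpose_apply, smul_eq_mul]
  have hSdiag : ∀ x, S x x = 0 := fun x => by rw [hSapp]; ring
  have hSskew : ∀ x y, S y x = -S x y := fun x y => by rw [hSapp, hSapp]; ring
  have hSconj : ∀ x y, (starRingEnd ℂ) (S x y) = -S x y := by
    intro x y
    rw [hSapp, _root_.map_mul, _root_.map_sub, hAconj, hAconj, Complex.conj_I]
    ring
  have hSpm : ∀ a b : Fin (2*d), a ≠ b → S a b = Complex.I ∨ S a b = -Complex.I := by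
    intro a b hab
    have hp := hApair a b hab
    rw [hSapp]
    rcases hA01 a b with h | h <;> rcases hA01 b a with h' | h' <;> rw [h, h'] at hp ⊢
    · exfalso; norm_num at hp
    · right; ring
    · left; ring
    · exfalso; norm_num at hp
  have hSsq : ∀ x y : Fin (2*d), x ≠ y → S x y * S y x = 1 := by
    intro x y hxy
    rcases hSpm x y hxy with h | h <;> rw [h, hSskew, h] <;>
      linear_combination (-1 : ℂ) * Complex.I_sq
  have hsum_ite : ∀ x : Fin (2*d), ∑ u, (if u = x then (0:ℂ) else 1) = 2*(d:ℂ) - 1 := by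
    intro x
    have h2 : ∀ u : Fin (2*d), (if u = x then (0:ℂ) else 1) = 1 - (if u = x then 1 else 0) := by
      intro u; by_cases hu : u = x <;> simp [hu]
    rw [Finset.sum_congr rfl fun u _ => h2 u, Finset.sum_sub_distrib, Finset.sum_const,
      Finset.card_univ, Fintype.card_fin, Finset.sum_ite_eq', if_pos (Finset.mem_univ x)]
    push_cast; ring
  have hSSdiag : ∀ x, (S * S) x x = 2*(d:ℂ) - 1 := by
    intro x
    rw [Matrix.mul_apply]
    have h1 : ∀ u, S x u * S u x = if u = x then 0 else 1 := by
      intro u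
      by_cases hu : u = x
      · rw [if_pos hu, hu, hSdiag]; ring
      · rw [if_neg hu]; exact hSsq x u (Ne.symm hu)
    rw [Finset.sum_congr rfl fun u _ => h1 u, hsum_ite x]
  have hherm : S.IsHermitian := by
    show Sᴴ = S
    ext x y
    rw [Matrix.conjTranspose_apply]
    rw [show (star (S y x) : ℂ) = (starRingEnd ℂ) (S y x) from rfl, hSconj, hSskew]
    ring
  have hsym : LinearMap.IsSymmetric (Matrix.toEuclideanLin S) :=
    (Matrix.isHermitian_iff_isSymmetric).mp hherm
  have htoE : ∀ x : EuclideanSpace ℂ (Fin (2*d)), Matrix.toEuclideanLin S x = S *ᵥ x := by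
    intro x; simp only [Matrix.toEuclideanLin_apply]
  have hmem : ∀ (μ : ℝ) (x : EuclideanSpace ℂ (Fin (2*d))),
      x ∈ eigSp S μ ↔ S *ᵥ x = (μ:ℂ) • x := by
    intro μ x
    rw [eigSp, LinearMap.mem_ker, LinearMap.sub_apply, LinearMap.smul_apply, LinearMap.id_apply,
      sub_eq_zero, ← (WithLp.ofLp_injective 2).eq_iff, WithLp.ofLp_smul, htoE]
  have hinner : ∀ x y : EuclideanSpace ℂ (Fin (2*d)),
      (inner ℂ x y : ℂ) = ∑ i, (starRingEnd ℂ) (x i) * y i := by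
    intro x y; simp [PiLp.inner_apply, RCLike.inner_apply, mul_comm]
  have horth : ∀ (μ ν : ℝ), μ ≠ ν → ∀ x ∈ eigSp S μ, ∀ y ∈ eigSp S ν, (inner ℂ x y : ℂ) = 0 := by
    intro μ ν hμν x hx y hy
    have h1 : S *ᵥ x = (μ:ℂ) • x := (hmem μ x).mp hx
    have h2 : S *ᵥ y = (ν:ℂ) • y := (hmem ν y).mp hy
    have hs := hsym x y
    rw [show Matrix.toEuclideanLin S x = (μ:ℂ) • x from WithLp.ofLp_injective 2 (by rw [htoE, h1, WithLp.ofLp_smul]),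
      show Matrix.toEuclideanLin S y = (ν:ℂ) • y from WithLp.ofLp_injective 2 (by rw [htoE, h2, WithLp.ofLp_smul]), inner_smul_left, inner_smul_right, Complex.conj_ofReal] at hs
    by_contra hne
    exact hμν (Complex.ofReal_inj.mp (mul_right_cancel₀ hne hs))
  have hconjvec : ∀ (μ : ℝ) (x : EuclideanSpace ℂ (Fin (2*d))), x ∈ eigSp S μ →
      (WithLp.toLp 2 (fun i => (starRingEnd ℂ) (x i)) : EuclideanSpace ℂ (Fin (2*d))) ∈ eigSp S (-μ) := by
    intro μ x hx
    rw [hmem] at hx ⊢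
    have hx' : ∀ i, ∑ u, S i u * x u = (μ:ℂ) * x i := fun i => congrFun hx i
    funext i
    show ∑ u, S i u * (starRingEnd ℂ) (x u) = ((-μ:ℝ):ℂ) * (starRingEnd ℂ) (x i)
    have h1 : ∀ u, S i u * (starRingEnd ℂ) (x u) = -((starRingEnd ℂ) (S i u * x u)) := by
      intro u; rw [_root_.map_mul, hSconj]; ring
    rw [Finset.sum_congr rfl fun u _ => h1 u, Finset.sum_neg_distrib, ← _root_.map_sum, hx' i,
      _root_.map_mul, Complex.conj_ofReal]
    push_cast; ring
  -- distinctness of eigenvalues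
  have ne12 : (-θ:ℝ) ≠ -φ := fun h => by simp only [neg_inj] at h; linarith
  have ne13 : (-θ:ℝ) ≠ φ := fun h => by linarith [h.symm.le]
  have ne14 : (-θ:ℝ) ≠ θ := fun h => by linarith [h.le]
  have ne23 : (-φ:ℝ) ≠ φ := fun h => by linarith [h.le]
  have ne24 : (-φ:ℝ) ≠ θ := fun h => by linarith [h.symm.le]
  have ne34 : (φ:ℝ) ≠ θ := ne_of_lt hφθ
  set e1 := eigSp S (-θ) with he1def
  set e2 := eigSp S (-φ) with he2def
  set e3 := eigSp S φ with he3def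
  set e4 := eigSp S θ with he4def
  have hf1 : Module.finrank ℂ e1 = d - 1 := hm1
  have hf2 : Module.finrank ℂ e2 = 1 := hm2
  have hf3 : Module.finrank ℂ e3 = 1 := hm3
  have hf4 : Module.finrank ℂ e4 = d - 1 := hm4
  have hsup12 : Module.finrank ℂ ↥(e1 ⊔ e2) = (d-1) + 1 := by
    rw [finrank_sup_orth _ _ (horth _ _ ne12), hf1, hf2]
  have ho3 : ∀ u ∈ e1 ⊔ e2, ∀ w ∈ e3, (inner ℂ u w : ℂ) = 0 := by
    intro u hu w hw
    rw [Submodule.mem_sup] at hu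
    obtain ⟨a, ha, b, hb, rfl⟩ := hu
    rw [inner_add_left, horth _ _ ne13 a ha w hw, horth _ _ ne23 b hb w hw, add_zero]
  have hsup123 : Module.finrank ℂ ↥(e1 ⊔ e2 ⊔ e3) = (d-1) + 1 + 1 := by
    rw [finrank_sup_orth _ _ ho3, hsup12, hf3]
  have ho4 : ∀ u ∈ e1 ⊔ e2 ⊔ e3, ∀ w ∈ e4, (inner ℂ u w : ℂ) = 0 := by
    intro u hu w hw
    rw [Submodule.mem_sup] at hu
    obtain ⟨a, ha, b, hb, rfl⟩ := hu
    rw [Submodule.mem_sup] at ha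
    obtain ⟨a1, ha1, a2, ha2, rfl⟩ := ha
    rw [inner_add_left, inner_add_left, horth _ _ ne14 a1 ha1 w hw,
      horth _ _ ne24 a2 ha2 w hw, horth _ _ ne34 b hb w hw, add_zero, add_zero]
  have hsup1234 : Module.finrank ℂ ↥(e1 ⊔ e2 ⊔ e3 ⊔ e4) = (d-1) + 1 + 1 + (d-1) := by
    rw [finrank_sup_orth _ _ ho4, hsup123, hf4]
  have htop : e1 ⊔ e2 ⊔ e3 ⊔ e4 = ⊤ := by
    apply Submodule.eq_top_of_finrank_eq
    rw [hsup1234, finrank_euclideanSpace_fin]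
    omega
  have hdecomp : ∀ v : EuclideanSpace ℂ (Fin (2*d)),
      ∃ a ∈ e1, ∃ b ∈ e2, ∃ c ∈ e3, ∃ e ∈ e4, v = a + b + c + e := by
    intro v
    have hv : v ∈ e1 ⊔ e2 ⊔ e3 ⊔ e4 := htop ▸ Submodule.mem_top
    rw [Submodule.mem_sup] at hv
    obtain ⟨p, hp, e, he, hpe⟩ := hv
    rw [Submodule.mem_sup] at hp
    obtain ⟨q, hq, c, hc, hqc⟩ := hp
    rw [Submodule.mem_sup] at hq
    obtain ⟨a, ha, b, hb, hab⟩ := hq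
    exact ⟨a, ha, b, hb, c, hc, e, he, by rw [← hpe, ← hqc, ← hab]⟩
  -- the all-ones vector is orthogonal to the ±θ eigenspaces
  set j : EuclideanSpace ℂ (Fin (2*d)) := WithLp.toLp 2 (fun _ => 1) with hjdef
  have hj1 : ∀ u ∈ e1, (inner ℂ u j : ℂ) = 0 := by
    unfold mainAngle at hβ1
    have hsq : (0:ℝ) < Real.sqrt (Fintype.card (Fin (2*d))) := by
      rw [Fintype.card_fin]
      apply Real.sqrt_pos.mpr
      exact_mod_cast Nat.pos_of_ne_zero (by omega)
    have hnorm : ‖(Submodule.orthogonalProjectionOnto (eigSp S (-θ)) (WithLp.toLp 2 (fun _ => 1)) :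
        EuclideanSpace ℂ (Fin (2*d)))‖ = 0 := by
      rcases mul_eq_zero.mp hβ1 with h | h
      · exact absurd h (one_div_ne_zero (ne_of_gt hsq))
      · exact h
    have hproj : (Submodule.orthogonalProjectionOnto (eigSp S (-θ)) (WithLp.toLp 2 (fun _ => 1)) :
        EuclideanSpace ℂ (Fin (2*d))) = 0 := norm_eq_zero.mp hnorm
    exact fun u hu => mem_orth_of_proj_zero (eigSp S (-θ)) _ hproj u hu
  have hj4 : ∀ u ∈ e4, (inner ℂ u j : ℂ) = 0 := by
    intro u hu
    have h1 : (WithLp.toLp 2 (fun i => (starRingEnd ℂ) (u i)) : EuclideanSpace ℂ (Fin (2*d))) ∈ e1 :=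
      hconjvec θ u hu
    have h2 := hj1 _ h1
    rw [hinner] at h2 ⊢
    have h3 : ∑ i, u i = 0 := by
      rw [← h2]
      refine Finset.sum_congr rfl fun i _ => ?_
      rw [Complex.conj_conj]
      simp [hjdef]
    calc ∑ i, (starRingEnd ℂ) (u i) * j i = (starRingEnd ℂ) (∑ i, u i) := by
          rw [_root_.map_sum]
          refine Finset.sum_congr rfl fun i _ => ?_
          simp [hjdef]
      _ = 0 := by rw [h3, _root_.map_zero]
  obtain ⟨a, ha, w, hw2, c, hc, e, he, hjdec⟩ := hdecomp j
  have hip : ∀ x : EuclideanSpace ℂ (Fin (2*d)),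
      (inner ℂ x j : ℂ) = inner ℂ x a + inner ℂ x w + inner ℂ x c + inner ℂ x e := by
    intro x; rw [hjdec, inner_add_right, inner_add_right, inner_add_right]
  have ha0 : a = 0 := by
    have h := hj1 a ha
    rw [hip a, horth _ _ ne12 a ha w hw2, horth _ _ ne13 a ha c hc,
      horth _ _ ne14 a ha e he, add_zero, add_zero, add_zero] at h
    exact inner_self_eq_zero.mp h
  have he0 : e = 0 := by
    have h := hj4 e he
    rw [hip e, horth _ _ (Ne.symm ne14) e he a ha, horth _ _ (Ne.symm ne24) e he w hw2,
      horth _ _ (Ne.symm ne34) e he c hc, zero_add, zero_add, zero_add] at h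
    exact inner_self_eq_zero.mp h
  have hjwc : j = w + c := by rw [hjdec, ha0, he0, zero_add, add_zero]
  have hwc : ∀ i, w i + c i = 1 := by
    intro i
    have h : (1:ℂ) = w i + c i := congrFun (congrArg WithLp.ofLp hjwc) i
    exact h.symm
  set wb : EuclideanSpace ℂ (Fin (2*d)) := WithLp.toLp 2 (fun i => (starRingEnd ℂ) (w i)) with hwbdef
  have hwbapp : ∀ i, wb i = (starRingEnd ℂ) (w i) := fun _ => rfl
  have hwb3 : wb ∈ e3 := by
    have h := hconjvec (-φ) w hw2
    rw [neg_neg] at h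
    exact h
  set cb : EuclideanSpace ℂ (Fin (2*d)) := WithLp.toLp 2 (fun i => (starRingEnd ℂ) (c i)) with hcbdef
  have hcbapp : ∀ i, cb i = (starRingEnd ℂ) (c i) := fun _ => rfl
  have hcb : cb ∈ e2 := hconjvec φ c hc
  have hdiff : w - cb = wb - c := by
    ext i
    show w i - cb i = wb i - c i
    rw [hcbapp, hwbapp]
    have h1 := hwc i
    have h2 : (starRingEnd ℂ) (w i) + (starRingEnd ℂ) (c i) = 1 := by
      rw [← _root_.map_add, h1, _root_.map_one]
    linear_combination h1 - h2
  have hsub2 : w - cb ∈ e2 := e2.sub_mem hw2 hcb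
  have hsub3 : w - cb ∈ e3 := by
    rw [hdiff]; exact e3.sub_mem hwb3 hc
  have hzero : w - cb = 0 :=
    inner_self_eq_zero.mp (horth _ _ ne23 _ hsub2 _ hsub3)
  have hcwb : c = wb := by
    ext i
    have h2 : w i - cb i = 0 := congrFun (congrArg WithLp.ofLp hzero) i
    rw [hcbapp] at h2
    show c i = wb i
    rw [hwbapp]
    have h3 : (starRingEnd ℂ) (c i) = w i := by linear_combination -h2
    rw [← h3, Complex.conj_conj]
  rw [hcwb] at hjwc
  have hwwb1 : ∀ i, w i + wb i = 1 := by
    intro i; have h := hwc i; rw [hcwb] at h; exact h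
  -- norms
  have howb : (inner ℂ w wb : ℂ) = 0 := horth _ _ ne23 w hw2 wb hwb3
  have hjj : (inner ℂ j j : ℂ) = 2*(d:ℂ) := by
    rw [hinner]
    have h1 : ∀ i : Fin (2*d), (starRingEnd ℂ) (j i) * j i = 1 := by
      intro i; simp [hjdef]
    rw [Finset.sum_congr rfl fun i _ => h1 i, Finset.sum_const, Finset.card_univ,
      Fintype.card_fin]
    push_cast; ring
  have hwbwb : (inner ℂ wb wb : ℂ) = inner ℂ w w := by
    rw [hinner, hinner]
    refine Finset.sum_congr rfl fun i _ => ?_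
    rw [hwbapp i, Complex.conj_conj]; ring
  have hsum_wbwb : ∑ i, wb i * wb i = 0 := by
    have h := howb
    rw [hinner] at h
    rw [← h]
    all_goals exact Finset.sum_congr rfl fun i _ => by rw [hwbapp]
  have hwbw : (inner ℂ wb w : ℂ) = 0 := by rw [← inner_conj_symm, howb, _root_.map_zero]
  have hww : (inner ℂ w w : ℂ) = (d:ℂ) := by
    have h := hjj
    rw [hjwc, inner_add_left, inner_add_right, inner_add_right, howb, hwbw, hwbwb] at h
    linear_combination h / 2
  have hdnez : (d:ℂ) ≠ 0 := Nat.cast_ne_zero.mpr (by omega)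
  have hwne : w ≠ 0 := by
    intro h0
    rw [h0, inner_zero_left] at hww
    exact hdnez hww.symm
  have hwbne : wb ≠ 0 := by
    intro h0
    rw [h0, inner_zero_left, hww] at hwbwb
    exact hdnez hwbwb.symm
  -- the middle eigenspaces are spanned by w and wb
  have he2span : e2 = Submodule.span ℂ {w} := by
    symm
    apply Submodule.eq_of_le_of_finrank_le
    · rw [Submodule.span_le, Set.singleton_subset_iff]; exact hw2
    · rw [hf2, finrank_span_singleton hwne]
  have he3span : e3 = Submodule.span ℂ {wb} := by
    symm
    apply Submodule.eq_of_le_of_finrank_le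
    · rw [Submodule.span_le, Set.singleton_subset_iff]; exact hwb3
    · rw [hf3, finrank_span_singleton hwbne]
  -- the quadratic identity for S
  set K : ℝ := (θ^2 - φ^2)/d with hKdef
  have hdRnez : ((d:ℝ)) ≠ 0 := Nat.cast_ne_zero.mpr (by omega)
  have hKpos : 0 < K := by
    rw [hKdef]
    apply div_pos (by nlinarith)
    exact_mod_cast Nat.pos_of_ne_zero (by omega)
  have hKd : (K:ℂ) * d = (θ:ℂ)^2 - (φ:ℂ)^2 := by
    rw [hKdef]; push_cast; field_simp
  set M : Matrix (Fin (2*d)) (Fin (2*d)) ℂ :=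
    ((θ:ℂ))^2 • (1 : Matrix (Fin (2*d)) (Fin (2*d)) ℂ)
      - (K:ℂ) • (Matrix.vecMulVec w wb + Matrix.vecMulVec wb w) with hMdef
  have hvmv : ∀ (p q v : Fin (2*d) → ℂ),
      Matrix.vecMulVec p q *ᵥ v = (∑ i, q i * v i) • p := by
    intro p q v
    funext x
    show ∑ u, (p x * q u) * v u = (∑ i, q i * v i) * p x
    rw [Finset.sum_mul]
    exact Finset.sum_congr rfl fun u _ => by ring
  have hSmulw : S *ᵥ w = ((-φ:ℝ):ℂ) • w := (hmem _ w).mp hw2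
  have hSmulwb : S *ᵥ wb = ((φ:ℝ):ℂ) • wb := (hmem _ wb).mp hwb3
  have hcase : ∀ (μ : ℝ) (v : EuclideanSpace ℂ (Fin (2*d))), v ∈ eigSp S μ →
      (S * S) *ᵥ v = ((μ:ℂ)^2) • v := by
    intro μ v hv
    rw [hmem] at hv
    rw [← Matrix.mulVec_mulVec, hv, Matrix.mulVec_smul, hv, smul_smul, ← sq]
  have hMv1 : ∀ (μ : ℝ), (μ = -θ ∨ μ = θ) → ∀ v ∈ eigSp S μ, M *ᵥ v = ((μ:ℂ)^2) • v := by
    intro μ hμ v hv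
    have hnea : (-φ:ℝ) ≠ μ := by rcases hμ with h | h <;> rw [h] <;> intro h2 <;> linarith [h2.le, h2.symm.le]
    have hneb : (φ:ℝ) ≠ μ := by rcases hμ with h | h <;> rw [h] <;> intro h2 <;> linarith [h2.le, h2.symm.le]
    have hz1 : ∑ i, wb i * v i = 0 := by
      have h := horth _ _ hnea w hw2 v hv
      rw [hinner] at h
      rw [← h]
      all_goals exact Finset.sum_congr rfl fun i _ => by rw [hwbapp]
    have hz2 : ∑ i, w i * v i = 0 := by
      have h := horth _ _ hneb wb hwb3 v hv
      rw [hinner] at h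
      rw [← h]
      refine Finset.sum_congr rfl fun i _ => ?_
      congr 1
      rw [hwbapp, Complex.conj_conj]
    rw [hMdef, Matrix.sub_mulVec, Matrix.smul_mulVec, Matrix.one_mulVec,
      Matrix.smul_mulVec, Matrix.add_mulVec, hvmv, hvmv, hz1, hz2]
    have hsq : ((μ:ℝ):ℂ)^2 = ((θ:ℝ):ℂ)^2 := by
      rcases hμ with h | h <;> rw [h] <;> push_cast <;> ring
    rw [hsq]
    simp
  have hMw : M *ᵥ w = ((-φ:ℝ):ℂ)^2 • w := by
    have hz1 : ∑ i, wb i * w i = (d:ℂ) := by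
      rw [← hww, hinner]
      all_goals exact Finset.sum_congr rfl fun i _ => by rw [hwbapp]; ring
    have hz2 : ∑ i, w i * w i = 0 := by
      have h := hwbw
      rw [hinner] at h
      rw [← h]
      refine Finset.sum_congr rfl fun i _ => ?_
      congr 1
      rw [hwbapp, Complex.conj_conj]
    rw [hMdef, Matrix.sub_mulVec, Matrix.smul_mulVec, Matrix.one_mulVec,
      Matrix.smul_mulVec, Matrix.add_mulVec, hvmv, hvmv, hz1, hz2, zero_smul, add_zero,
      smul_smul, hKd]
    have hs : ((θ:ℝ):ℂ)^2 - ((θ:ℂ)^2 - (φ:ℂ)^2) = ((-φ:ℝ):ℂ)^2 := by push_cast; ring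
    rw [← sub_smul, hs]
  have hMwb : M *ᵥ wb = ((φ:ℝ):ℂ)^2 • wb := by
    have hz1 : ∑ i, wb i * wb i = 0 := hsum_wbwb
    have hz2 : ∑ i, w i * wb i = (d:ℂ) := by
      have h := hwbwb
      rw [hww, hinner] at h
      rw [← h]
      refine Finset.sum_congr rfl fun i _ => ?_
      congr 1
      rw [hwbapp, Complex.conj_conj]
    rw [hMdef, Matrix.sub_mulVec, Matrix.smul_mulVec, Matrix.one_mulVec,
      Matrix.smul_mulVec, Matrix.add_mulVec, hvmv, hvmv, hz1, hz2, zero_smul, zero_add,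
      smul_smul, hKd]
    have hs : ((θ:ℝ):ℂ)^2 - ((θ:ℂ)^2 - (φ:ℂ)^2) = ((φ:ℝ):ℂ)^2 := by push_cast; ring
    rw [← sub_smul, hs]
  have hMv2 : ∀ v ∈ e2, (S * S) *ᵥ v = M *ᵥ v := by
    intro v hv
    rw [he2span, Submodule.mem_span_singleton] at hv
    obtain ⟨t, rfl⟩ := hv
    rw [WithLp.ofLp_smul, Matrix.mulVec_smul, Matrix.mulVec_smul, hcase (-φ) w hw2, hMw]
  have hMv3 : ∀ v ∈ e3, (S * S) *ᵥ v = M *ᵥ v := by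
    intro v hv
    rw [he3span, Submodule.mem_span_singleton] at hv
    obtain ⟨t, rfl⟩ := hv
    rw [WithLp.ofLp_smul, Matrix.mulVec_smul, Matrix.mulVec_smul, hcase φ wb hwb3, hMwb]
  have hkey : ∀ v : EuclideanSpace ℂ (Fin (2*d)), (S * S) *ᵥ v = M *ᵥ v := by
    intro v
    obtain ⟨a', ha', b', hb', c', hc', e', he', hv⟩ := hdecomp v
    rw [hv, WithLp.ofLp_add, WithLp.ofLp_add, WithLp.ofLp_add, Matrix.mulVec_add, Matrix.mulVec_add, Matrix.mulVec_add,
      Matrix.mulVec_add, Matrix.mulVec_add, Matrix.mulVec_add,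
      hcase (-θ) a' ha', hcase θ e' he', hMv1 (-θ) (Or.inl rfl) a' ha',
      hMv1 θ (Or.inr rfl) e' he', hMv2 b' hb', hMv3 c' hc']
  have hSSM : ∀ x y, (S * S) x y = M x y := by
    intro x y
    have hl : ∀ N : Matrix (Fin (2*d)) (Fin (2*d)) ℂ,
        (N *ᵥ (fun u => if u = y then 1 else 0)) x = N x y := by
      intro N
      show ∑ u, N x u * (if u = y then 1 else 0) = N x y
      have h1 : ∀ u, N x u * (if u = y then 1 else 0) = if u = y then N x u else 0 := by
        intro u; by_cases hu : u = y <;> simp [hu]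
      rw [Finset.sum_congr rfl fun u _ => h1 u, Finset.sum_ite_eq', if_pos (Finset.mem_univ y)]
    have h := congrFun (hkey (WithLp.toLp 2 (fun u => if u = y then 1 else 0))) x
    simp only [WithLp.ofLp_toLp] at h
    rw [← hl (S*S), h, hl M]
  
  have hMapp : ∀ x y, M x y = ((θ:ℂ))^2 * (if x = y then 1 else 0)
      - (K:ℂ) * (w x * wb y + wb x * w y) := by
    intro x y
    rw [hMdef, Matrix.sub_apply, Matrix.smul_apply, Matrix.one_apply, Matrix.smul_apply,
      Matrix.add_apply, Matrix.vecMulVec_apply, Matrix.vecMulVec_apply, smul_eq_mul,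
      smul_eq_mul]
  have hdiagid : ∀ x, 2*(d:ℂ) - 1 = ((θ:ℂ))^2 - (K:ℂ) * (2 * (w x * wb x)) := by
    intro x
    have h := hSSdiag x
    rw [hSSM, hMapp, if_pos rfl] at h
    linear_combination -h
  have hKnez : (K:ℂ) ≠ 0 := by
    simp only [ne_eq, Complex.ofReal_eq_zero]
    exact hKpos.ne'
  have hsumw : ∑ x, w x * wb x = (d:ℂ) := by
    rw [← hww, hinner]
    all_goals exact Finset.sum_congr rfl fun i _ => by rw [hwbapp]; ring
  have hwwb_half : ∀ x, w x * wb x = 1/2 := by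
    have hconst : ∀ x y : Fin (2*d), w x * wb x = w y * wb y := by
      intro x y
      have hx := hdiagid x
      have hy := hdiagid y
      have h1 : (K:ℂ) * (2 * (w x * wb x)) = (K:ℂ) * (2 * (w y * wb y)) := by
        linear_combination hx - hy
      have h2 := mul_left_cancel₀ hKnez h1
      linear_combination h2 / 2
    intro x
    have hsum2 : ∑ y : Fin (2*d), w y * wb y = ∑ _y : Fin (2*d), w x * wb x :=
      Finset.sum_congr rfl fun y _ => hconst y x
    have h3 : (d:ℂ) = (2*d : ℕ) • (w x * wb x) := by
      rw [← hsumw, hsum2, Finset.sum_const, Finset.card_univ, Fintype.card_fin]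
    rw [nsmul_eq_mul] at h3
    have h2d : ((2*d : ℕ):ℂ) = 2*(d:ℂ) := by push_cast; ring
    rw [h2d] at h3
    have h4 : 2*(d:ℂ) * (w x * wb x) = 2*(d:ℂ) * (1/2) := by
      rw [← h3]; ring
    exact mul_left_cancel₀ (mul_ne_zero two_ne_zero hdnez) h4
  -- the sign vector σ
  set σ : Fin (2*d) → ℂ := fun x => -Complex.I * (2 * w x - 1) with hσdef
  have hσval : ∀ x, σ x = -Complex.I * (2 * w x - 1) := fun x => rfl
  have hwσ : ∀ x, w x = (1 + Complex.I * σ x)/2 := by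
    intro x; rw [hσval]
    linear_combination ((2*w x - 1)/2) * Complex.I_sq
  have hwbσ : ∀ x, wb x = (1 - Complex.I * σ x)/2 := by
    intro x
    have h1 := hwwb1 x
    linear_combination h1 - hwσ x
  have hσsq : ∀ x, σ x * σ x = 1 := by
    intro x
    have h1 := hwwb1 x
    have h2 := hwwb_half x
    rw [hσval]
    linear_combination (2*w x - 1)^2 * Complex.I_sq + (-4*(w x)) * h1 + 4 * h2
  have hσpm : ∀ x, σ x = 1 ∨ σ x = -1 := by
    intro x
    have h2 : (σ x - 1) * (σ x + 1) = 0 := by linear_combination hσsq x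
    rcases mul_eq_zero.mp h2 with h3 | h3
    · left; linear_combination h3
    · right; linear_combination h3
  have hσsum : ∑ x, σ x = 0 := by
    have h2 : ∑ i, wb i * wb i = 0 := hsum_wbwb
    have h3 : ∑ i, wb i * wb i = (-Complex.I/2) * ∑ i, σ i := by
      rw [Finset.mul_sum]
      refine Finset.sum_congr rfl fun i _ => ?_
      have hb := hwbσ i
      have hs := hσsq i
      linear_combination (wb i + (1 - Complex.I * σ i)/2) * hb
        + (σ i * σ i/4) * Complex.I_sq - (1/4) * hs
    have h4 : (-Complex.I/2) * ∑ i, σ i = 0 := by rw [← h3]; exact h2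
    rcases mul_eq_zero.mp h4 with h5 | h5
    · exfalso
      apply Complex.I_ne_zero
      linear_combination -2 * h5
    · exact h5
  -- row sums
  have hSw_entry : ∀ x, ∑ u, S x u * w u = ((-φ:ℝ):ℂ) * w x := by
    intro x
    exact congrFun hSmulw x
  have hSwb_entry : ∀ x, ∑ u, S x u * wb u = ((φ:ℝ):ℂ) * wb x := by
    intro x
    exact congrFun hSmulwb x
  have hSj : ∀ x, ∑ u, S x u = -(φ:ℂ) * (Complex.I * σ x) := by
    intro x
    have h1 : ∑ u, S x u = ∑ u, (S x u * w u + S x u * wb u) := by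
      refine Finset.sum_congr rfl fun u _ => ?_
      linear_combination (-(S x u)) * hwwb1 u
    rw [h1, Finset.sum_add_distrib, hSw_entry x, hSwb_entry x]
    push_cast
    linear_combination (-(φ:ℂ)) * hwσ x + (φ:ℂ) * hwbσ x
  have hSσ : ∀ x, ∑ u, S x u * σ u = (φ:ℂ) * Complex.I := by
    intro x
    have h1 : ∑ u, S x u * σ u
        = ∑ u, (-Complex.I * (S x u * w u) + Complex.I * (S x u * wb u)) := by
      refine Finset.sum_congr rfl fun u _ => ?_
      rw [hσval]
      linear_combination (-Complex.I * S x u) * hwwb1 u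
    rw [h1, Finset.sum_add_distrib, ← Finset.mul_sum, ← Finset.mul_sum, hSw_entry x,
      hSwb_entry x]
    push_cast
    linear_combination (φ:ℂ) * Complex.I * hwwb1 x
  have hoffσ : ∀ x y, x ≠ y → ∑ u, S x u * S u y = -(K:ℂ) * ((1 + σ x * σ y)/2) := by
    intro x y hxy
    have h : (S * S) x y = M x y := hSSM x y
    rw [Matrix.mul_apply] at h
    rw [h, hMapp, if_neg hxy]
    have h1 := hwσ x; have h2 := hwbσ y; have h3 := hwbσ x; have h4 := hwσ y
    linear_combination (-(K:ℂ) * wb y) * h1 + (-(K:ℂ) * (1 + Complex.I * σ x)/2) * h2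
      + (-(K:ℂ) * w y) * h3 + (-(K:ℂ) * (1 - Complex.I * σ x)/2) * h4
      + ((K:ℂ) * (σ x * σ y)/2) * Complex.I_sq
  -- pin down φ
  obtain ⟨z0, -⟩ : ∃ z0 : Fin (2*d), True := ⟨⟨0, by omega⟩, trivial⟩
  obtain ⟨r, hr⟩ := exists01 (fun u => A z0 u) (fun u => hA01 _ u)
  have hrowA : ∑ u, S z0 u = Complex.I * (2*(r:ℂ) - (2*(d:ℂ) - 1)) := by
    have h1 : ∀ u, S z0 u
        = Complex.I * (2 * A z0 u - (A z0 u + A u z0)) := by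
      intro u; rw [hSapp]; ring
    rw [Finset.sum_congr rfl fun u _ => h1 u, ← Finset.mul_sum, Finset.sum_sub_distrib,
      ← Finset.mul_sum]
    have h2 : ∑ u, (A z0 u + A u z0) = 2*(d:ℂ) - 1 := by
      have h3 : ∀ u, A z0 u + A u z0
          = if u = z0 then 0 else 1 := by
        intro u
        by_cases hu : u = z0
        · rw [if_pos hu, hu, hAdiag]; ring
        · rw [if_neg hu]; exact hApair _ u (Ne.symm hu)
      rw [Finset.sum_congr rfl fun u _ => h3 u, hsum_ite]
    rw [h2, hr]
  have hφval : 2*(r:ℂ) - (2*(d:ℂ) - 1) = -(φ:ℂ) * σ z0 := by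
    have h := hSj z0
    rw [hrowA] at h
    have h2 : Complex.I * (2*(r:ℂ) - (2*(d:ℂ)-1))
        = Complex.I * (-(φ:ℂ) * σ z0) := by
      rw [h]; ring
    exact mul_left_cancel₀ Complex.I_ne_zero h2
  have hφ1 : 1 ≤ φ := by
    rcases hσpm z0 with hs | hs <;> rw [hs] at hφval
    · have hreal : (φ:ℂ) = ((2*(d:ℝ) - 1 - 2*(r:ℝ) : ℝ):ℂ) := by
        push_cast
        linear_combination hφval
      have hrr : φ = 2*(d:ℝ) - 1 - 2*(r:ℝ) := Complex.ofReal_inj.mp hreal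
      have h1 : 2*(r:ℝ) < 2*(d:ℝ) - 1 := by linarith
      have h2 : 2*r + 2 ≤ 2*d := by
        by_contra hcon
        push_neg at hcon
        have h3 : d ≤ r := by omega
        have h4 : (d:ℝ) ≤ (r:ℝ) := by exact_mod_cast h3
        linarith
      have h5 : (2*(r:ℝ) + 2) ≤ 2*(d:ℝ) := by exact_mod_cast h2
      linarith
    · have hreal : (φ:ℂ) = ((2*(r:ℝ) - 2*(d:ℝ) + 1 : ℝ):ℂ) := by
        push_cast
        linear_combination -hφval
      have hrr : φ = 2*(r:ℝ) - 2*(d:ℝ) + 1 := Complex.ofReal_inj.mp hreal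
      have h1 : 2*(d:ℝ) - 1 < 2*(r:ℝ) := by linarith
      have h2 : 2*d ≤ 2*r := by
        by_contra hcon
        push_neg at hcon
        have h3 : r ≤ d - 1 := by omega
        have h4 : 2*r + 2 ≤ 2*d := by omega
        have h5 : (2*(r:ℝ) + 2) ≤ 2*(d:ℝ) := by exact_mod_cast h4
        linarith
      have h5 : 2*(d:ℝ) ≤ 2*(r:ℝ) := by exact_mod_cast h2
      linarith
  -- pin down K
  obtain ⟨x, y, hxy, hσeq⟩ : ∃ x y : Fin (2*d), x ≠ y ∧ σ x = σ y := by
    have h01 : (⟨0, by omega⟩ : Fin (2*d)) ≠ ⟨1, by omega⟩ := by simp [Fin.ext_iff]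
    have h02 : (⟨0, by omega⟩ : Fin (2*d)) ≠ ⟨2, by omega⟩ := by simp [Fin.ext_iff]
    have h12 : (⟨1, by omega⟩ : Fin (2*d)) ≠ ⟨2, by omega⟩ := by simp [Fin.ext_iff]
    rcases hσpm ⟨0, by omega⟩ with h0 | h0 <;> rcases hσpm ⟨1, by omega⟩ with h1 | h1 <;>
      rcases hσpm ⟨2, by omega⟩ with h2 | h2 <;>
      first
        | exact ⟨_, _, h01, h0.trans h1.symm⟩
        | exact ⟨_, _, h02, h0.trans h2.symm⟩
        | exact ⟨_, _, h12, h1.trans h2.symm⟩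
  have hKval : (K:ℂ) = -(∑ u, S x u * S u y) := by
    have h := hoffσ x y hxy
    rw [hσeq, hσsq y] at h
    rw [h]; ring
  obtain ⟨N, hN⟩ := exists01
    (fun u => if u = x ∨ u = y then 0 else (1 - S x u * S u y)/2) (by
      intro u
      by_cases hu : u = x ∨ u = y
      · left; simp only [if_pos hu]
      · push_neg at hu
        have hcond : ¬(u = x ∨ u = y) := by tauto
        simp only [if_neg hcond]
        have hxu : x ≠ u := fun h => hu.1 h.symm
        have huy : u ≠ y := hu.2
        have hprod : S x u * S u y = 1 ∨ S x u * S u y = -1 := by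
          rcases hSpm x u hxu with h1 | h1 <;> rcases hSpm u y huy with h2 | h2 <;>
            rw [h1, h2]
          · right; linear_combination Complex.I_sq
          · left; linear_combination -Complex.I_sq
          · left; linear_combination -Complex.I_sq
          · right; linear_combination Complex.I_sq
        rcases hprod with h1 | h1 <;> rw [h1]
        · left; ring
        · right; ring)
  have hsumS : ∑ u, S x u * S u y = (2*(d:ℂ) - 2) - 2*(N:ℂ) := by
    have h1 : ∀ u, S x u * S u y =
        (if u = x ∨ u = y then 0 else 1)
          - 2 * (if u = x ∨ u = y then 0 else (1 - S x u * S u y)/2) := by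
      intro u
      by_cases hu : u = x ∨ u = y
      · rw [if_pos hu, if_pos hu]
        rcases hu with hu | hu <;> rw [hu]
        · rw [hSdiag]; ring
        · rw [hSdiag]; ring
      · rw [if_neg hu, if_neg hu]; ring
    rw [Finset.sum_congr rfl fun u _ => h1 u, Finset.sum_sub_distrib, ← Finset.mul_sum, hN]
    have h2 : ∑ u : Fin (2*d), (if u = x ∨ u = y then (0:ℂ) else 1) = 2*(d:ℂ) - 2 := by
      have h3 : ∀ u : Fin (2*d), (if u = x ∨ u = y then (0:ℂ) else 1)
          = 1 - (if u = x then 1 else 0) - (if u = y then 1 else 0) := by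
        intro u
        by_cases h4 : u = x
        · subst h4; rw [if_pos (Or.inl rfl), if_pos rfl, if_neg hxy]; ring
        · by_cases h5 : u = y
          · subst h5; rw [if_pos (Or.inr rfl), if_neg h4, if_pos rfl]; ring
          · rw [if_neg (by tauto), if_neg h4, if_neg h5]; ring
      rw [Finset.sum_congr rfl fun u _ => h3 u, Finset.sum_sub_distrib, Finset.sum_sub_distrib,
        Finset.sum_const, Finset.card_univ, Fintype.card_fin, Finset.sum_ite_eq',
        Finset.sum_ite_eq', if_pos (Finset.mem_univ x), if_pos (Finset.mem_univ y)]
      push_cast; ring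
    rw [h2]
  have hKreal : K = 2*(N:ℝ) - (2*(d:ℝ) - 2) := by
    have h := hKval
    rw [hsumS] at h
    have h2 : ((K:ℝ):ℂ) = ((2*(N:ℝ) - (2*(d:ℝ) - 2) : ℝ):ℂ) := by
      push_cast
      linear_combination h
    exact_mod_cast h2
  have hNd : d ≤ N := by
    by_contra hcon
    push_neg at hcon
    have h1 : N + 1 ≤ d := hcon
    have h2 : (N:ℝ) + 1 ≤ (d:ℝ) := by exact_mod_cast h1
    linarith [hKpos, hKreal]
  have hK2 : 2 ≤ K := by
    have h1 : (d:ℝ) ≤ (N:ℝ) := by exact_mod_cast hNd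
    rw [hKreal]; linarith
  have hθK : θ^2 = 2*(d:ℝ) - 1 + K := by
    have h := hdiagid x
    rw [hwwb_half x] at h
    have h2 : ((2*(d:ℝ) - 1 : ℝ):ℂ) = ((θ^2 - K : ℝ):ℂ) := by
      push_cast
      linear_combination h
    have h3 := Complex.ofReal_inj.mp h2
    linarith
  have hφ2 : φ^2 = 2*(d:ℝ) - 1 - ((d:ℝ) - 1) * K := by
    have h1 : K * d = θ^2 - φ^2 := by
      rw [hKdef]; field_simp
    linarith
  have hKle2 : K ≤ 2 := by
    have h1 : 1 ≤ φ^2 := by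
      have hm := mul_le_mul hφ1 hφ1 (by norm_num) (by linarith)
      calc (1:ℝ) = 1*1 := by ring
        _ ≤ φ*φ := hm
        _ = φ^2 := by ring
    have h2 : (3:ℝ) ≤ (d:ℝ) := by exact_mod_cast hd
    have h3 : ((d:ℝ) - 1) * K ≤ 2*(d:ℝ) - 2 := by linarith [hφ2, h1]
    by_contra hcon
    push_neg at hcon
    have h4 : ((d:ℝ) - 1) * 2 < ((d:ℝ) - 1) * K :=
      mul_lt_mul_of_pos_left hcon (by linarith)
    linarith
  have hKeq2 : K = 2 := le_antisymm hKle2 hK2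
  have hφeq1 : φ = 1 := by
    have h1 : φ^2 = 1 := by rw [hφ2, hKeq2]; ring
    have h2 : (φ - 1) * (φ + 1) = 0 := by linear_combination h1
    rcases mul_eq_zero.mp h2 with h3 | h3
    · linarith
    · linarith
  -- translate to the combinatorial data
  have hIne : Complex.I ≠ 0 := Complex.I_ne_zero
  have hErow2 : ∀ z, ∑ u, (A z u - A u z) = -σ z := by
    intro z
    have h := hSj z
    rw [hφeq1] at h
    have h1 : ∑ u, S z u = Complex.I * ∑ u, (A z u - A u z) := by
      rw [Finset.mul_sum]
      exact Finset.sum_congr rfl fun u _ => hSapp z u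
    rw [h1] at h
    apply mul_left_cancel₀ hIne
    rw [h]; push_cast; ring
  have hEσ2 : ∀ z, ∑ u, (A z u - A u z) * σ u = 1 := by
    intro z
    have h := hSσ z
    rw [hφeq1] at h
    have h1 : ∑ u, S z u * σ u = Complex.I * ∑ u, (A z u - A u z) * σ u := by
      rw [Finset.mul_sum]
      refine Finset.sum_congr rfl fun u _ => ?_
      rw [hSapp]; ring
    rw [h1] at h
    apply mul_left_cancel₀ hIne
    rw [h]; push_cast; ring
  have hflip : ∀ z y : Fin (2*d),
      ∑ u, S z u * S u y = - ∑ u, (A z u - A u z) * (A u y - A y u) := by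
    intro z y
    rw [← Finset.sum_neg_distrib]
    refine Finset.sum_congr rfl fun u _ => ?_
    rw [hSapp, hSapp]
    linear_combination ((A z u - A u z) * (A u y - A y u)) * Complex.I_sq
  have hEE2 : ∀ z y, z ≠ y → ∑ u, (A z u - A u z) * (A u y - A y u) = 1 + σ z * σ y := by
    intro z y hzy
    have h := hoffσ z y hzy
    rw [hKeq2, hflip z y] at h
    push_cast at h
    linear_combination -h
  have hEEdiag2 : ∀ z, ∑ u, (A z u - A u z) * (A u z - A z u) = -(2*(d:ℂ) - 1) := by
    intro z
    have h := hSSdiag z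
    rw [Matrix.mul_apply, hflip z z] at h
    linear_combination -h
  exact construct hd A hA01 hApair hAdiag σ hσpm hσsum hErow2 hEσ2 hEE2 hEEdiag2
end

section
/- Let d be an even positive integer. If X is a complex spherical 2-code in Ω(d) with |X| = 2d and adjacency matrix A, then I + A − Aᵀ is a skew Hadamard matrix of order 2d. Conversely, if there exists a skew Hadamard matrix H of order 2d, then the tournament with adjacency matrix A = (H + J)/2 − I is representable in Ω(d), so there exists a complex spherical 2-code of size 2d in Ω(d). -/
open Matrix
open scoped Classical

lemma finrank_le_inf_ker_add_one {K M : Type*} [Field K] [AddCommGroup M] [Module K M]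
    [FiniteDimensional K M] (W : Submodule K M) (f : M →ₗ[K] K) :
    Module.finrank K W ≤ Module.finrank K (W ⊓ LinearMap.ker f : Submodule K M) + 1 := by
  have h1 : Module.finrank K (W ⊓ LinearMap.ker f : Submodule K M)
      = Module.finrank K (LinearMap.ker (f.comp W.subtype)) := by
    rw [LinearMap.ker_comp, ← Submodule.map_comap_subtype]
    exact (Submodule.equivSubtypeMap W _).finrank_eq.symm
  rw [h1]
  have h2 := LinearMap.finrank_range_add_finrank_ker (f.comp W.subtype)
  have h3 : Module.finrank K (LinearMap.range (f.comp W.subtype)) ≤ 1 := by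
    simpa [Module.finrank_self] using Submodule.finrank_le (LinearMap.range (f.comp W.subtype))
  omega

/-- dot product as a linear functional -/
noncomputable def dotL {V : Type*} [Fintype V] (w : V → ℂ) : (V → ℂ) →ₗ[ℂ] ℂ where
  toFun v := w ⬝ᵥ v
  map_add' u v := by simp [dotProduct_add]
  map_smul' c v := by simp [dotProduct_smul]

lemma dotL_apply {V : Type*} [Fintype V] (w v : V → ℂ) : dotL w v = w ⬝ᵥ v := rfl

lemma dot_mulVec_flip {V : Type*} [Fintype V] [DecidableEq V] (M : Matrix V V ℂ)
    (u v : V → ℂ) : u ⬝ᵥ (M *ᵥ v) = (Mᵀ *ᵥ u) ⬝ᵥ v := by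
  rw [dotProduct_mulVec]
  congr 1
  rw [← Matrix.transpose_transpose M, Matrix.vecMul_transpose, Matrix.transpose_transpose]

open Matrix
open scoped Classical

lemma gram_transfer {E : Type*} [NormedAddCommGroup E] [InnerProductSpace ℂ E]
    [FiniteDimensional ℂ E] {d n : ℕ} (W : Submodule ℂ E) (hW : Module.finrank ℂ W = d)
    (v : Fin n → E) (hmem : ∀ x, v x ∈ W) (G : Matrix (Fin n) (Fin n) ℂ)
    (hinner : ∀ x y, (inner ℂ (v x) (v y) : ℂ) = G x y) :
    ∃ φ : Fin n → EuclideanSpace ℂ (Fin d),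
      ∀ x y, (inner ℂ (φ x) (φ y) : ℂ) = G x y := by
  have ob : OrthonormalBasis (Fin d) ℂ W :=
    (stdOrthonormalBasis ℂ W).reindex (finCongr hW)
  refine ⟨fun x => ob.repr ⟨v x, hmem x⟩, fun x y => ?_⟩
  rw [LinearIsometryEquiv.inner_map_map, Submodule.coe_inner]
  exact hinner x y

lemma rank_of_proj {n d : ℕ} (hn : n = 2*d) (G : Matrix (Fin n) (Fin n) ℂ)
    (hGG : G * G = (2:ℂ) • G) (hGt : Gᵀ = (2:ℂ) • 1 - G) : G.rank = d := by
  have hmul0 : G * ((2:ℂ) • 1 - G) = 0 := by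
    rw [Matrix.mul_sub, Matrix.mul_smul, Matrix.mul_one, hGG]
    simp
  have hsum : G + ((2:ℂ) • 1 - G) = (2:ℂ) • (1 : Matrix (Fin n) (Fin n) ℂ) := by abel
  set G' : Matrix (Fin n) (Fin n) ℂ := (2:ℂ) • 1 - G with hG'
  have hsup : (LinearMap.range G.mulVecLin) ⊔ (LinearMap.range G'.mulVecLin) = ⊤ := by
    rw [eq_top_iff]
    intro v _
    refine Submodule.mem_sup.2 ⟨G.mulVecLin ((2:ℂ)⁻¹ • v), LinearMap.mem_range_self _ _,
      G'.mulVecLin ((2:ℂ)⁻¹ • v), LinearMap.mem_range_self _ _, ?_⟩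
    have h : (G + G') *ᵥ ((2:ℂ)⁻¹ • v) = v := by
      rw [hsum, Matrix.smul_mulVec, Matrix.one_mulVec, smul_smul]
      norm_num
    simpa [Matrix.mulVecLin_apply, Matrix.add_mulVec, Matrix.mulVec_smul] using h
  have hinf : (LinearMap.range G.mulVecLin) ⊓ (LinearMap.range G'.mulVecLin) = ⊥ := by
    rw [eq_bot_iff]
    rintro v ⟨⟨u, hu⟩, ⟨w, hw⟩⟩
    simp only [Matrix.mulVecLin_apply] at hu hw
    have h1 : G *ᵥ v = 0 := by
      rw [← hw, Matrix.mulVec_mulVec, hmul0, Matrix.zero_mulVec]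
    have h2 : G *ᵥ v = (2:ℂ) • v := by
      rw [← hu, Matrix.mulVec_mulVec, hGG, Matrix.smul_mulVec, hu]
    have h3 : (2:ℂ) • v = 0 := by rw [← h2, h1]
    have hv : v = 0 := by
      have := congrArg (fun z => (2:ℂ)⁻¹ • z) h3
      simpa [smul_smul] using this
    simp [hv]
  have hfr := Submodule.finrank_sup_add_finrank_inf_eq
    (LinearMap.range G.mulVecLin) (LinearMap.range G'.mulVecLin)
  rw [hsup, hinf] at hfr
  have e1 : Module.finrank ℂ (⊤ : Submodule ℂ (Fin n → ℂ)) = n := by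
    rw [finrank_top, Module.finrank_pi]
    simp
  have e2 : Module.finrank ℂ (⊥ : Submodule ℂ (Fin n → ℂ)) = 0 := finrank_bot ℂ _
  rw [e1, e2] at hfr
  have hG'rank : G'.rank = G.rank := by rw [← hGt, Matrix.rank_transpose]
  have h1 : G.rank + G.rank = n := by
    have h2 : Module.finrank ℂ (LinearMap.range G'.mulVecLin) = G'.rank := rfl
    have h3 : Module.finrank ℂ (LinearMap.range G.mulVecLin) = G.rank := rfl
    rw [h2, h3, hG'rank] at hfr
    omega
  omega

lemma exists_gram_vectors {n d : ℕ} (G : Matrix (Fin n) (Fin n) ℂ)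
    (hrank : G.rank = d) (hherm : Gᴴ = G) (hGG : G * G = (2:ℂ) • G) :
    ∃ φ : Fin n → EuclideanSpace ℂ (Fin d),
      ∀ x y, (inner ℂ (φ x) (φ y) : ℂ) = G x y := by
  classical
  set L : (Fin n → ℂ) →ₗ[ℂ] EuclideanSpace ℂ (Fin n) :=
    ((WithLp.linearEquiv 2 ℂ (Fin n → ℂ)).symm.toLinearMap) ∘ₗ G.mulVecLin with hL
  set W : Submodule ℂ (EuclideanSpace ℂ (Fin n)) := LinearMap.range L with hW
  have hWrank : Module.finrank ℂ W = d := by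
    have h1 : W = Submodule.map ((WithLp.linearEquiv 2 ℂ (Fin n → ℂ)).symm.toLinearMap)
        (LinearMap.range G.mulVecLin) := LinearMap.range_comp _ _
    rw [h1]
    exact (LinearEquiv.finrank_map_eq ((WithLp.linearEquiv 2 ℂ (Fin n → ℂ)).symm) _).trans hrank
  set c : ℝ := (Real.sqrt 2)⁻¹ with hc
  have hc2 : (c:ℂ)^2 * 2 = 1 := by
    have h2 : (Real.sqrt 2)^2 = 2 := Real.sq_sqrt (by norm_num)
    have hr : (c:ℝ)^2 * 2 = 1 := by
      rw [hc, inv_pow, h2]; norm_num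
    calc (c:ℂ)^2 * 2 = (((c:ℝ)^2 * 2 : ℝ) : ℂ) := by push_cast; ring
    _ = 1 := by rw [hr]; norm_num
  set v : Fin n → EuclideanSpace ℂ (Fin n) :=
    fun x => L ((c:ℂ) • (Pi.single x 1 : Fin n → ℂ)) with hv
  have hmem : ∀ x, v x ∈ W := fun x => LinearMap.mem_range_self _ _
  have hventry : ∀ x i, (v x) i = (c:ℂ) * G i x := by
    intro x i
    show (L ((c:ℂ) • (Pi.single x 1 : Fin n → ℂ))) i = (c:ℂ) * G i x
    rw [_root_.map_smul]
    have h1 : L (Pi.single x 1 : Fin n → ℂ) = (WithLp.linearEquiv 2 ℂ (Fin n → ℂ)).symm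
        (G *ᵥ (Pi.single x 1 : Fin n → ℂ)) := rfl
    rw [h1, Matrix.mulVec_single]
    show (c:ℂ) * ((WithLp.linearEquiv 2 ℂ (Fin n → ℂ)).symm (fun i => G i x * 1)) i
      = (c:ℂ) * G i x
    simp [WithLp.linearEquiv]
  have hinner : ∀ x y, (inner ℂ (v x) (v y) : ℂ) = G x y := by
    intro x y
    rw [PiLp.inner_apply]
    have hterm : ∀ i, (inner ℂ ((v x) i) ((v y) i) : ℂ) = (c:ℂ)^2 * (G x i * G i y) := by
      intro i
      rw [hventry, hventry, RCLike.inner_apply]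
      rw [_root_.map_mul]
      have hconj : (starRingEnd ℂ) (G i x) = G x i := by
        conv_rhs => rw [← hherm]
        simp [Matrix.conjTranspose_apply]
      rw [hconj, Complex.conj_ofReal]
      ring
    rw [Finset.sum_congr rfl (fun i _ => hterm i), ← Finset.mul_sum]
    have hGsq : ∑ i, G x i * G i y = 2 * G x y := by
      have h := congrFun (congrFun hGG x) y
      simpa [Matrix.mul_apply, Matrix.smul_apply, smul_eq_mul] using h
    rw [hGsq, ← mul_assoc, hc2, one_mul]
  exact gram_transfer W hWrank v hmem G hinner


lemma dir2 {d : ℕ} (hd : 0 < d) (H : Matrix (Fin (2*d)) (Fin (2*d)) ℂ) (hH : IsSkewHadamard H) :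
    Representable ((1 / 2 : ℂ) • (H + Matrix.of (fun _ _ => (1 : ℂ))) - 1) d ∧
    ∃ (X : Finset (EuclideanSpace ℂ (Fin d))) (α : ℂ),
      IsTwoCode X α ∧ X.card = 2 * d := by
  obtain ⟨h1, h2, h3⟩ := hH
  rw [Fintype.card_fin] at h3
  set N : ℂ := ((2*d : ℕ) : ℂ) with hN
  have hdiag : ∀ x, H x x = 1 := by
    intro x
    have := congrFun (congrFun h2 x) x
    simp only [Matrix.add_apply, Matrix.transpose_apply, Matrix.smul_apply, Matrix.one_apply_eq,
      smul_eq_mul, mul_one] at this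
    linear_combination this / 2
  have hskew : ∀ x y, x ≠ y → H x y + H y x = 0 := by
    intro x y hxy
    have := congrFun (congrFun h2 x) y
    simpa only [Matrix.add_apply, Matrix.transpose_apply, Matrix.smul_apply,
      Matrix.one_apply_ne hxy, smul_eq_mul, mul_zero] using this
  have hHt : Hᵀ = (2:ℂ) • 1 - H := by rw [eq_sub_iff_add_eq, add_comm]; exact h2
  -- the scalar b
  have hdpos : (0:ℝ) < 2*(d:ℝ) - 1 := by
    have : (1:ℝ) ≤ (d:ℝ) := by exact_mod_cast hd
    linarith
  set b : ℝ := (Real.sqrt (2*(d:ℝ) - 1))⁻¹ with hb'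
  have hb : 0 < b := by
    rw [hb']
    exact inv_pos.2 (Real.sqrt_pos.2 hdpos)
  have hb2 : b^2 * (2*(d:ℝ) - 1) = 1 := by
    rw [hb', inv_pow, Real.sq_sqrt hdpos.le]
    field_simp
  have hb2c : ((b:ℂ))^2 * (N - 1) = 1 := by
    have : ((b^2 * (2*(d:ℝ) - 1) : ℝ) : ℂ) = 1 := by rw [hb2]; norm_num
    rw [hN]
    push_cast at this ⊢
    linear_combination this
  set β : ℂ := (b:ℂ) * Complex.I with hβ
  have hβim : β.im = b := by rw [hβ]; simp
  have hβre : β.re = 0 := by rw [hβ]; simp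
  have hconjβ : (starRingEnd ℂ) β = -β := by
    rw [hβ, _root_.map_mul, Complex.conj_I, Complex.conj_ofReal]; ring
  set S : Matrix (Fin (2*d)) (Fin (2*d)) ℂ := H - 1 with hS
  have hSt : Sᵀ = -S := by
    rw [hS, Matrix.transpose_sub, Matrix.transpose_one, hHt, two_smul]
    abel
  have hHH : H * H = (2:ℂ) • H - N • 1 := by
    have h4 := h3
    rw [hHt, Matrix.mul_sub, Matrix.mul_smul, Matrix.mul_one] at h4
    rw [← h4]; abel
  have hSS : S * S = (-(N - 1)) • 1 := by
    have e1 : S * S = H * H - H - H + 1 := by rw [hS]; noncomm_ring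
    rw [hHH, two_smul] at e1
    rw [e1, neg_smul, sub_smul, one_smul]
    abel
  set G : Matrix (Fin (2*d)) (Fin (2*d)) ℂ := 1 + β • S with hG
  have hgmul : G * G = (2:ℂ) • G := by
    have e2 : G * G = 1 + β • S + β • S + (β * β) • (S * S) := by
      rw [hG]
      simp only [add_mul, mul_add, one_mul, mul_one, Matrix.mul_smul, Matrix.smul_mul,
        smul_smul]
      abel
    have e3 : (β * β) • (S * S) = (1 : Matrix (Fin (2*d)) (Fin (2*d)) ℂ) := by
      rw [hSS, smul_smul]
      have e4 : β * β * -(N - 1) = 1 := by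
        have hI := Complex.I_mul_I
        rw [hβ]
        linear_combination (-(N-1))*(b:ℂ)^2*hI + hb2c
      rw [e4, one_smul]
    rw [e2, e3, hG, two_smul]
    abel
  have hSH : Sᴴ = -S := by
    rw [← hSt]
    ext i j
    rw [Matrix.conjTranspose_apply, Matrix.transpose_apply, hS]
    simp only [Matrix.sub_apply, Matrix.one_apply, star_sub]
    rcases h1 j i with h | h <;> rw [h] <;> by_cases hji : j = i <;> simp [hji]
  have hherm : Gᴴ = G := by
    rw [hG, Matrix.conjTranspose_add, Matrix.conjTranspose_one, Matrix.conjTranspose_smul,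
      hSH, RCLike.star_def, hconjβ, neg_smul, smul_neg, neg_neg]
  have hGt : Gᵀ = (2:ℂ) • 1 - G := by
    rw [hG, Matrix.transpose_add, Matrix.transpose_one, Matrix.transpose_smul, hSt, two_smul,
      smul_neg]
    abel
  have hrank : G.rank = d := rank_of_proj rfl G hgmul hGt
  obtain ⟨φ, hφ⟩ := exists_gram_vectors G hrank hherm hgmul
  have hGdiag : ∀ x, G x x = 1 := by
    intro x
    rw [hG]
    simp only [Matrix.add_apply, Matrix.smul_apply, Matrix.one_apply_eq, hS, Matrix.sub_apply,
      Matrix.one_apply_eq, hdiag x, smul_eq_mul]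
    ring
  have hGoff : ∀ x y, x ≠ y → G x y = β * H x y := by
    intro x y hxy
    rw [hG]
    simp only [Matrix.add_apply, Matrix.smul_apply, Matrix.one_apply_ne hxy, hS,
      Matrix.sub_apply, Matrix.one_apply_ne hxy, smul_eq_mul]
    ring
  have hnorm : ∀ x, ‖φ x‖ = 1 := by
    intro x
    have e5 : (inner ℂ (φ x) (φ x) : ℂ) = 1 := by rw [hφ, hGdiag]
    rw [inner_self_eq_norm_sq_to_K] at e5
    have e6 : ‖φ x‖^2 = 1 := by
      have h : ((‖φ x‖^2 : ℝ) : ℂ) = ((1:ℝ) : ℂ) := by push_cast; exact e5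
      exact Complex.ofReal_injective h
    nlinarith [norm_nonneg (φ x)]
  set A : Matrix (Fin (2*d)) (Fin (2*d)) ℂ :=
    (1 / 2 : ℂ) • (H + Matrix.of (fun _ _ => (1 : ℂ))) - 1 with hA
  have hAoff : ∀ x y, x ≠ y → A x y = (H x y + 1) / 2 := by
    intro x y hxy
    rw [hA]
    simp only [Matrix.sub_apply, Matrix.smul_apply, Matrix.add_apply, Matrix.of_apply,
      Matrix.one_apply_ne hxy, smul_eq_mul]
    ring
  have hinj : Function.Injective φ := by
    intro x y hxy
    by_contra hne
    have e7 : (inner ℂ (φ x) (φ y) : ℂ) = 1 := by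
      rw [hxy, inner_self_eq_norm_sq_to_K, hnorm]; norm_num
    rw [hφ, hGoff x y hne] at e7
    rcases h1 x y with h | h <;> rw [h] at e7
    · rw [mul_one] at e7
      have := congrArg Complex.im e7
      rw [hβim] at this
      simp at this
      exact absurd this (ne_of_gt hb)
    · have := congrArg Complex.im e7
      simp only [Complex.mul_im, Complex.one_im, Complex.neg_re, Complex.neg_im] at this
      rw [show β * (-1) = -β by ring] at e7
      have := congrArg Complex.im e7
      rw [Complex.neg_im, hβim] at this
      simp at this
      exact absurd this (ne_of_gt hb)
  constructor
  · -- Representable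
    refine ⟨β, φ, ?_, hnorm, ?_⟩
    · rw [hβim]; exact hb
    · intro x y hxy
      constructor
      · intro hAxy
        have hHxy : H x y = 1 := by
          have := hAoff x y hxy
          rw [hAxy] at this
          linear_combination -2 * this
        rw [hφ, hGoff x y hxy, hHxy, mul_one]
      · intro hAyx
        have hHyx : H y x = 1 := by
          have := hAoff y x (Ne.symm hxy)
          rw [hAyx] at this
          linear_combination -2 * this
        have hHxy : H x y = -1 := by
          have := hskew x y hxy
          rw [hHyx] at this
          linear_combination this
        rw [hφ, hGoff x y hxy, hHxy, hconjβ]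
        ring
  · -- 2-code
    refine ⟨Finset.image φ Finset.univ, β, ⟨?_, ?_, ?_⟩, ?_⟩
    · rw [hβim]; exact ne_of_gt hb
    · intro u hu
      obtain ⟨x, _, rfl⟩ := Finset.mem_image.1 hu
      exact hnorm x
    · ext z
      simp only [Set.mem_setOf_eq, Set.mem_insert_iff, Set.mem_singleton_iff]
      constructor
      · rintro ⟨u, hu, w, hw, hne, hz⟩
        obtain ⟨x, _, rfl⟩ := Finset.mem_image.1 hu
        obtain ⟨y, _, rfl⟩ := Finset.mem_image.1 hw
        have hxy : x ≠ y := fun h => hne (by rw [h])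
        rw [hφ, hGoff x y hxy] at hz
        rcases h1 x y with h | h <;> rw [h] at hz
        · left; rw [← hz]; ring
        · right; rw [← hz, hconjβ]; ring
      · intro hz
        have h2d : 1 < 2*d := by omega
        set x0 : Fin (2*d) := ⟨0, by omega⟩ with hx0
        set y0 : Fin (2*d) := ⟨1, by omega⟩ with hy0
        have hne0 : x0 ≠ y0 := by
          intro h
          have : (0:ℕ) = 1 := congrArg Fin.val h
          exact absurd this (by norm_num)
        have key : ∀ p q : Fin (2*d), p ≠ q → ∃ u ∈ Finset.image φ Finset.univ,
            ∃ w ∈ Finset.image φ Finset.univ, u ≠ w ∧ (inner ℂ u w : ℂ) = β * H p q := by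
          intro p q hpq
          exact ⟨φ p, Finset.mem_image_of_mem φ (Finset.mem_univ p),
            φ q, Finset.mem_image_of_mem φ (Finset.mem_univ q),
            fun h => hpq (hinj h), by rw [hφ, hGoff p q hpq]⟩
        rcases hz with hz | hz
        · -- z = β : need a pair with H p q = 1
          rcases h1 x0 y0 with h | h
          · obtain ⟨u, hu, w, hw, hne, hi⟩ := key x0 y0 hne0
            exact ⟨u, hu, w, hw, hne, by rw [hi, h, hz]; ring⟩
          · have h' : H y0 x0 = 1 := by
              have := hskew x0 y0 hne0
              rw [h] at this
              linear_combination this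
            obtain ⟨u, hu, w, hw, hne, hi⟩ := key y0 x0 (Ne.symm hne0)
            exact ⟨u, hu, w, hw, hne, by rw [hi, h', hz]; ring⟩
        · -- z = conj β = -β : need a pair with H p q = -1
          have hzneg : z = -β := by rw [hz, hconjβ]
          rcases h1 x0 y0 with h | h
          · have h' : H y0 x0 = -1 := by
              have := hskew x0 y0 hne0
              rw [h] at this
              linear_combination this
            obtain ⟨u, hu, w, hw, hne, hi⟩ := key y0 x0 (Ne.symm hne0)
            exact ⟨u, hu, w, hw, hne, by rw [hi, h', hzneg]; ring⟩
          · obtain ⟨u, hu, w, hw, hne, hi⟩ := key x0 y0 hne0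
            exact ⟨u, hu, w, hw, hne, by rw [hi, h, hzneg]; ring⟩
    · rw [Finset.card_image_of_injective _ hinj, Finset.card_univ, Fintype.card_fin]

open scoped ComplexOrder

set_option maxHeartbeats 1600000 in
lemma key_SS {V : Type*} [Fintype V] [DecidableEq V] {d : ℕ} (hd : 0 < d) (heven : Even d)
    (hcard : Fintype.card V = 2 * d)
    (A : Matrix V V ℂ)
    (hA01 : ∀ x y, A x y = 0 ∨ A x y = 1)
    (hAdiag : ∀ x, A x x = 0)
    (hAsum : ∀ x y : V, x ≠ y → A x y + A y x = 1)
    (a b : ℝ) (hb : 0 < b) (hab : a^2 + b^2 ≤ 1)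
    (G : Matrix V V ℂ)
    (hGdiag : ∀ x, G x x = 1)
    (hGoff : ∀ x y, x ≠ y → G x y =
      ((a:ℂ) + (b:ℂ)*Complex.I) * A x y + ((a:ℂ) - (b:ℂ)*Complex.I) * A y x)
    (hrank : G.rank ≤ d) :
    (A - Aᵀ) * (A - Aᵀ) = (-((((2*d : ℕ)):ℂ) - 1)) • 1 := by
  classical
  have hV : Nonempty V := Fintype.card_pos_iff.mp (by omega)
  set nC : ℂ := ((2*d : ℕ) : ℂ) with hnC
  have hnC0 : nC ≠ 0 := by
    rw [hnC]
    exact_mod_cast (by omega : (2*d:ℕ) ≠ 0)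
  clear_value nC
  set S : Matrix V V ℂ := A - Aᵀ with hS
  have hSdiag : ∀ x, S x x = 0 := by
    intro x; simp [hS, Matrix.sub_apply, hAdiag]
  have hSskew : ∀ x y, S y x = - S x y := by
    intro x y
    simp only [hS, Matrix.sub_apply, Matrix.transpose_apply]
    ring
  have hSoff : ∀ x y, x ≠ y → S x y = 2 * A x y - 1 := by
    intro x y h
    have h2 := hAsum x y h
    simp only [hS, Matrix.sub_apply, Matrix.transpose_apply]
    linear_combination -h2
  have hSpm : ∀ x y, x ≠ y → S x y = 1 ∨ S x y = -1 := by
    intro x y h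
    rcases hA01 x y with h0 | h1
    · right; rw [hSoff x y h, h0]; ring
    · left; rw [hSoff x y h, h1]; ring
  have hSreal : ∀ x y, (starRingEnd ℂ) (S x y) = S x y := by
    intro x y
    by_cases h : x = y
    · subst h; rw [hSdiag]; simp
    · rcases hSpm x y h with h1 | h1 <;> rw [h1] <;> simp
  have hSt : Sᵀ = -S := by
    rw [hS, Matrix.transpose_sub, Matrix.transpose_transpose]
    abel
  clear_value S
  -- scalars
  have ha1 : a < 1 := by nlinarith
  set τ : ℂ := ((1 - a : ℝ) : ℂ) with hτ
  have hτ0 : τ ≠ 0 := by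
    rw [hτ]
    exact_mod_cast (by linarith : (1 - a : ℝ) ≠ 0)
  have hconjτ : (starRingEnd ℂ) τ = τ := by rw [hτ, Complex.conj_ofReal]
  clear_value τ
  set βc : ℂ := (b:ℂ) * Complex.I with hβc
  have hbC : ((b:ℂ)) ≠ 0 := by exact_mod_cast (ne_of_gt hb)
  have hβc0 : βc ≠ 0 := by
    rw [hβc]
    exact mul_ne_zero hbC Complex.I_ne_zero
  have hconjβc : (starRingEnd ℂ) βc = -βc := by
    rw [hβc, _root_.map_mul, Complex.conj_I, Complex.conj_ofReal]; ring
  have hββ : βc * βc = -((b:ℂ)^2) := by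
    rw [hβc]
    linear_combination ((b:ℂ)^2) * Complex.I_mul_I
  clear_value βc
  set μ : ℂ := βc⁻¹ * (-τ) with hμ
  have hμ0 : μ ≠ 0 := by
    rw [hμ]; exact mul_ne_zero (inv_ne_zero hβc0) (neg_ne_zero.2 hτ0)
  have hβμ : βc * μ = -τ := by rw [hμ, ← mul_assoc, mul_inv_cancel₀ hβc0, one_mul]
  have hconjμ : (starRingEnd ℂ) μ = -μ := by
    rw [hμ, _root_.map_mul, map_inv₀, map_neg, hconjβc, hconjτ, inv_neg]
    ring
  clear_value μ
  set c : ℂ := τ^2 / (b:ℂ)^2 with hc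
  have hconjc : (starRingEnd ℂ) c = c := by
    rw [hc, map_div₀, map_pow, map_pow, hconjτ, Complex.conj_ofReal]
  have hcb : c * (b:ℂ)^2 = τ^2 := by
    rw [hc]; field_simp
  clear_value c
  have hμ2 : μ * μ = -c := by
    have h2 : (μ * μ) * (βc * βc) = τ^2 := by
      have e1 : (μ * μ) * (βc * βc) = (βc * μ) * (βc * μ) := by ring
      rw [e1, hβμ]
      ring
    have h3 : (-c) * (βc * βc) = τ^2 := by
      rw [hββ]
      linear_combination hcb
    exact mul_right_cancel₀ (mul_ne_zero hβc0 hβc0) (h2.trans h3.symm)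
  -- eigenspaces
  set Em := LinearMap.ker (S - μ • 1).mulVecLin with hEmdef
  set Ep := LinearMap.ker (S + μ • 1).mulVecLin with hEpdef
  have hmemEm : ∀ v, v ∈ Em ↔ S *ᵥ v = μ • v := by
    intro v
    rw [hEmdef, LinearMap.mem_ker, Matrix.mulVecLin_apply, Matrix.sub_mulVec,
      Matrix.smul_mulVec, Matrix.one_mulVec, sub_eq_zero]
  have hmemEp : ∀ v, v ∈ Ep ↔ S *ᵥ v = (-μ) • v := by
    intro v
    rw [hEpdef, LinearMap.mem_ker, Matrix.mulVecLin_apply, Matrix.add_mulVec,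
      Matrix.smul_mulVec, Matrix.one_mulVec, add_eq_zero_iff_eq_neg, neg_smul]
  set Jone : V → ℂ := fun _ => 1 with hJone
  have hGd : G = τ • 1 + (a:ℂ) • (Matrix.of fun _ _ => (1:ℂ)) + βc • S := by
    ext x y
    by_cases h : x = y
    · subst h
      simp only [Matrix.add_apply, Matrix.smul_apply, Matrix.one_apply_eq, Matrix.of_apply,
        smul_eq_mul, hGdiag, hSdiag, hτ]
      push_cast
      ring
    · have h2 := hAsum x y h
      simp only [Matrix.add_apply, Matrix.smul_apply, Matrix.one_apply_ne h, Matrix.of_apply,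
        smul_eq_mul, hGoff x y h, hτ, hβc, hSoff x y h]
      push_cast
      linear_combination ((a:ℂ) - (b:ℂ)*Complex.I) * h2
  have hGv : ∀ v : V → ℂ, G *ᵥ v = τ • v + ((a:ℂ) * (Jone ⬝ᵥ v)) • Jone + βc • (S *ᵥ v) := by
    intro v
    rw [hGd, Matrix.add_mulVec, Matrix.add_mulVec, Matrix.smul_mulVec,
      Matrix.smul_mulVec, Matrix.smul_mulVec, Matrix.one_mulVec]
    congr 1
    congr 1
    ext x
    simp only [Pi.smul_apply, smul_eq_mul, Matrix.mulVec, dotProduct, Matrix.of_apply,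
      one_mul, hJone, Finset.mul_sum]
    ring
  -- dimension bookkeeping
  have hker_add : ∀ M : Matrix V V ℂ,
      M.rank + Module.finrank ℂ (LinearMap.ker M.mulVecLin) = 2*d := by
    intro M
    have h := LinearMap.finrank_range_add_finrank_ker M.mulVecLin
    rwa [Module.finrank_pi, hcard] at h
  have hkerG : d ≤ Module.finrank ℂ (LinearMap.ker G.mulVecLin) := by
    have := hker_add G; omega
  set K := LinearMap.ker G.mulVecLin ⊓ LinearMap.ker (dotL Jone) with hK
  have hKfin : d ≤ Module.finrank ℂ K + 1 := by
    have := finrank_le_inf_ker_add_one (LinearMap.ker G.mulVecLin) (dotL Jone)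
    rw [← hK] at this
    omega
  have hKEm : K ≤ Em := by
    intro v hv
    have hv' : v ∈ LinearMap.ker G.mulVecLin ⊓ LinearMap.ker (dotL Jone) := by
      rw [← hK]; exact hv
    obtain ⟨hv1, hv2⟩ := Submodule.mem_inf.mp hv'
    rw [LinearMap.mem_ker, Matrix.mulVecLin_apply] at hv1
    rw [LinearMap.mem_ker, dotL_apply] at hv2
    rw [hmemEm]
    have h := hGv v
    rw [hv1, hv2, mul_zero, zero_smul, add_zero] at h
    have h2 : βc • (S *ᵥ v) = -(τ • v) := eq_neg_of_add_eq_zero_right h.symm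
    calc S *ᵥ v = βc⁻¹ • (βc • (S *ᵥ v)) := by rw [smul_smul, inv_mul_cancel₀ hβc0, one_smul]
    _ = βc⁻¹ • (-(τ • v)) := by rw [h2]
    _ = μ • v := by
        rw [smul_neg, smul_smul, hμ, ← neg_smul]
        congr 1
        ring
  -- rank of the conjugate matrix
  have hconjM : ((S - μ • 1)ᴴ)ᵀ = S + μ • 1 := by
    ext x y
    rw [Matrix.transpose_apply, Matrix.conjTranspose_apply]
    simp only [Matrix.sub_apply, Matrix.add_apply, Matrix.smul_apply, smul_eq_mul]
    rw [star_sub, show star (S x y) = (starRingEnd ℂ) (S x y) from rfl, hSreal,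
      show star (μ * (1 : Matrix V V ℂ) x y) = (starRingEnd ℂ) (μ * (1 : Matrix V V ℂ) x y)
        from rfl, _root_.map_mul, hconjμ]
    by_cases h : x = y
    · subst h; simp
    · simp [Matrix.one_apply_ne h]
  have hfinEp : Module.finrank ℂ Ep = Module.finrank ℂ Em := by
    have hrkEp : (S + μ • 1).rank = (S - μ • 1).rank := by
      rw [← hconjM, Matrix.rank_transpose, Matrix.rank_conjTranspose]
    have h1 := hker_add (S - μ • 1)
    have h2 := hker_add (S + μ • 1)
    rw [hrkEp] at h2
    rw [← hEmdef] at h1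
    rw [← hEpdef] at h2
    omega
  have hinfEmEp : Em ⊓ Ep = ⊥ := by
    rw [eq_bot_iff]
    rintro v ⟨h1, h2⟩
    have e1 := (hmemEm v).1 h1
    have e2 := (hmemEp v).1 h2
    have e3 : (μ - -μ) • v = 0 := by rw [sub_smul, ← e1, ← e2, sub_self]
    rw [Submodule.mem_bot]
    have hne : μ - -μ ≠ 0 := by
      intro h
      apply hμ0
      have h4 : (2:ℂ) * μ = 0 := by linear_combination h
      exact (mul_eq_zero.mp h4).resolve_left two_ne_zero
    exact (smul_eq_zero.mp e3).resolve_left hne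
  set MM : Matrix V V ℂ := S * S + c • 1 with hMM
  have hMMv : ∀ v, MM *ᵥ v = S *ᵥ (S *ᵥ v) + c • v := by
    intro v
    rw [hMM, Matrix.add_mulVec, Matrix.smul_mulVec, Matrix.one_mulVec,
      Matrix.mulVec_mulVec]
  have hkillEm : ∀ v ∈ Em, MM *ᵥ v = 0 := by
    intro v hv
    have e1 := (hmemEm v).1 hv
    rw [hMMv, e1, Matrix.mulVec_smul, e1, smul_smul, hμ2, neg_smul, neg_add_cancel]
  have hkillEp : ∀ v ∈ Ep, MM *ᵥ v = 0 := by
    intro v hv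
    have e1 := (hmemEp v).1 hv
    rw [hMMv, e1, Matrix.mulVec_smul, e1, smul_smul,
      show (-μ) * (-μ) = μ * μ by ring, hμ2, neg_smul, neg_add_cancel]
  have hkillSup : ∀ v ∈ Em ⊔ Ep, MM *ᵥ v = 0 := by
    intro v hv
    obtain ⟨ve, hve, vp, hvp, rfl⟩ := Submodule.mem_sup.mp hv
    rw [Matrix.mulVec_add, hkillEm ve hve, hkillEp vp hvp, add_zero]
  -- sigma
  set σ : V → ℂ := S *ᵥ Jone with hσdef
  have hdotσ : ∀ v, σ ⬝ᵥ v = -(Jone ⬝ᵥ (S *ᵥ v)) := by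
    intro v
    calc σ ⬝ᵥ v = v ⬝ᵥ σ := dotProduct_comm _ _
    _ = (Sᵀ *ᵥ v) ⬝ᵥ Jone := by rw [hσdef, dot_mulVec_flip]
    _ = ((-S) *ᵥ v) ⬝ᵥ Jone := by rw [hSt]
    _ = -(Jone ⬝ᵥ (S *ᵥ v)) := by
        rw [Matrix.neg_mulVec, neg_dotProduct, dotProduct_comm]
  have hσsum : Jone ⬝ᵥ σ = 0 := by
    have h := hdotσ Jone
    have h2 : σ ⬝ᵥ Jone = Jone ⬝ᵥ σ := dotProduct_comm _ _
    rw [h2, ← hσdef] at h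
    linear_combination h / 2
  set O : V → ℕ := fun x => (Finset.univ.filter (fun y => A x y = 1)).card with hO
  have hAite : ∀ x y, A x y = if A x y = 1 then (1:ℂ) else 0 := by
    intro x y
    rcases hA01 x y with h | h <;> simp [h]
  have hrowA : ∀ x, ∑ y, A x y = (O x : ℂ) := by
    intro x
    rw [Finset.sum_congr rfl (fun y _ => hAite x y), Finset.sum_boole, hO]
  have hpairsum : ∀ x, ∑ y, (A x y + A y x) = nC - 1 := by
    intro x
    rw [← Finset.add_sum_erase _ _ (Finset.mem_univ x), hAdiag x, add_zero, zero_add]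
    have h1 : ∀ y ∈ Finset.univ.erase x, A x y + A y x = 1 := by
      intro y hy
      exact hAsum x y (Ne.symm (Finset.ne_of_mem_erase hy))
    rw [Finset.sum_congr rfl h1, Finset.sum_const, Finset.card_erase_of_mem (Finset.mem_univ x),
      Finset.card_univ, hcard, nsmul_eq_mul, mul_one, hnC]
    push_cast [Nat.cast_sub (by omega : 1 ≤ 2*d)]
    ring
  have hσrow : ∀ x, σ x = ∑ y, S x y := by
    intro x
    rw [hσdef]
    simp [Matrix.mulVec, dotProduct, hJone]
  have hσval : ∀ x, σ x = 2*(O x : ℂ) - (nC - 1) := by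
    intro x
    rw [hσrow]
    calc ∑ y, S x y = ∑ y, (2 * A x y - (A x y + A y x)) := by
          apply Finset.sum_congr rfl
          intro y _
          by_cases h : x = y
          · subst h; rw [hSdiag, hAdiag]; ring
          · rw [hSoff x y h]
            linear_combination hAsum x y h
    _ = 2 * (∑ y, A x y) - ∑ y, (A x y + A y x) := by
          rw [Finset.sum_sub_distrib, Finset.mul_sum]
    _ = 2*(O x:ℂ) - (nC - 1) := by rw [hrowA, hpairsum]
  set zf : V → ℤ := fun x => 2*(O x : ℤ) - (2*(d:ℤ) - 1) with hzf
  have hσz : ∀ x, σ x = ((zf x : ℤ) : ℂ) := by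
    intro x
    rw [hσval, hzf, hnC]
    push_cast
    ring
  have hzodd : ∀ x, zf x ≠ 0 := by
    intro x
    simp only [hzf]
    omega
  have hσ0 : ∀ x, σ x ≠ 0 := by
    intro x
    rw [hσz]
    exact_mod_cast hzodd x
  have hconjσ : ∀ x, (starRingEnd ℂ) (σ x) = σ x := by
    intro x
    rw [hσz]
    simp
  set s₂ : ℂ := σ ⬝ᵥ σ with hs₂
  have hs₂z : s₂ = ((∑ x, (zf x)^2 : ℤ) : ℂ) := by
    rw [hs₂, dotProduct]
    push_cast
    apply Finset.sum_congr rfl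
    intro x _
    rw [hσz]
    push_cast
    ring
  have hs₂0 : s₂ ≠ 0 := by
    rw [hs₂z]
    have hpos : 0 < ∑ x, (zf x)^2 := by
      have h1 : ∀ x ∈ Finset.univ, 1 ≤ (zf x)^2 := by
        intro x _
        have h2 := hzodd x
        rcases lt_or_gt_of_ne h2 with h3 | h3 <;> nlinarith
      calc (0:ℤ) < (Finset.univ : Finset V).card • 1 := by
            rw [Finset.card_univ, hcard]
            simp
            omega
      _ ≤ ∑ x, (zf x)^2 := Finset.card_nsmul_le_sum _ _ _ h1
    exact_mod_cast hpos.ne'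
  -- THE CLAIM
  have hCLAIM : ∀ v : V → ℂ, Jone ⬝ᵥ v = 0 → σ ⬝ᵥ v = 0 → MM *ᵥ v = 0 := by
    by_cases hk : d ≤ Module.finrank ℂ Em
    · intro v _ _
      have hsup : Em ⊔ Ep = ⊤ := by
        have h1 := Submodule.finrank_sup_add_finrank_inf_eq Em Ep
        rw [hinfEmEp] at h1
        have h2 : Module.finrank ℂ (⊥ : Submodule ℂ (V → ℂ)) = 0 := finrank_bot ℂ _
        have h3 := Submodule.finrank_le (Em ⊔ Ep)
        rw [Module.finrank_pi, hcard] at h3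
        apply Submodule.eq_top_of_finrank_eq
        rw [Module.finrank_pi, hcard]
        omega
      exact hkillSup v (hsup ▸ Submodule.mem_top)
    · push_neg at hk
      have hmono := Submodule.finrank_mono hKEm
      have hEmK : K = Em := Submodule.eq_of_le_of_finrank_le hKEm (by omega)
      have hEm1 : ∀ v ∈ Em, Jone ⬝ᵥ v = 0 := by
        intro v hv
        rw [← hEmK, hK] at hv
        have h2 := (Submodule.mem_inf.mp hv).2
        rwa [LinearMap.mem_ker, dotL_apply] at h2
      have hEmσ : ∀ v ∈ Em, σ ⬝ᵥ v = 0 := by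
        intro v hv
        rw [hdotσ, (hmemEm v).1 hv, dotProduct_smul, hEm1 v hv]
        simp
      have hstarEm : ∀ v ∈ Ep, (fun x => (starRingEnd ℂ) (v x)) ∈ Em := by
        intro v hv
        rw [hmemEm]
        have e1 := (hmemEp v).1 hv
        funext x
        have e2 : (S *ᵥ (fun x => (starRingEnd ℂ) (v x))) x = (starRingEnd ℂ) ((S *ᵥ v) x) := by
          simp only [Matrix.mulVec, dotProduct, map_sum, _root_.map_mul, hSreal]
        rw [e2, e1]
        simp only [Pi.smul_apply, smul_eq_mul, neg_smul]
        rw [_root_.map_mul, map_neg, hconjμ]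
        ring
      have hEp1 : ∀ v ∈ Ep, Jone ⬝ᵥ v = 0 := by
        intro v hv
        have h1 := hEm1 _ (hstarEm v hv)
        have h2 : Jone ⬝ᵥ (fun x => (starRingEnd ℂ) (v x)) = (starRingEnd ℂ) (Jone ⬝ᵥ v) := by
          simp [dotProduct, hJone, map_sum]
        rw [h2] at h1
        have := congrArg (starRingEnd ℂ) h1
        simpa using this
      have hEpσ : ∀ v ∈ Ep, σ ⬝ᵥ v = 0 := by
        intro v hv
        rw [hdotσ, (hmemEp v).1 hv, dotProduct_smul, hEp1 v hv]
        simp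
      set U := LinearMap.ker (dotL Jone) ⊓ LinearMap.ker (dotL σ) with hU
      have hsupU : Em ⊔ Ep ≤ U := by
        apply sup_le
        · intro v hv
          rw [hU]
          exact Submodule.mem_inf.mpr
            ⟨(LinearMap.mem_ker).mpr (hEm1 v hv), (LinearMap.mem_ker).mpr (hEmσ v hv)⟩
        · intro v hv
          rw [hU]
          exact Submodule.mem_inf.mpr
            ⟨(LinearMap.mem_ker).mpr (hEp1 v hv), (LinearMap.mem_ker).mpr (hEpσ v hv)⟩
      have hfrW1 : Module.finrank ℂ (LinearMap.ker (dotL (V := V) Jone)) + 1 = 2*d := by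
        have h1 := LinearMap.finrank_range_add_finrank_ker (dotL (V := V) Jone)
        rw [Module.finrank_pi, hcard] at h1
        have hle : Module.finrank ℂ (LinearMap.range (dotL (V := V) Jone)) ≤ 1 := by
          simpa [Module.finrank_self] using
            Submodule.finrank_le (LinearMap.range (dotL (V := V) Jone))
        have hne : Module.finrank ℂ (LinearMap.range (dotL (V := V) Jone)) ≠ 0 := by
          intro h0
          have hbot := Submodule.finrank_eq_zero.mp h0
          have hmem := LinearMap.mem_range_self (dotL (V := V) Jone) Jone
          rw [hbot, Submodule.mem_bot, dotL_apply] at hmem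
          have h5 : nC = 0 := by
            rw [← hmem]
            simp [dotProduct, hJone, hnC, hcard]
          exact hnC0 h5
        omega
      have hUlt : U < LinearMap.ker (dotL (V := V) Jone) := by
        apply lt_of_le_of_ne inf_le_left
        intro heq
        have hσW1 : σ ∈ LinearMap.ker (dotL (V := V) Jone) := by
          rw [LinearMap.mem_ker, dotL_apply]
          exact hσsum
        have hσU : σ ∈ U := by
          have h9 := hσW1
          rwa [← heq] at h9
        rw [hU] at hσU
        have h2 := (Submodule.mem_inf.mp hσU).2
        rw [LinearMap.mem_ker, dotL_apply] at h2
        exact hs₂0 (hs₂.trans h2)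
      have hUfr := Submodule.finrank_lt_finrank_of_lt hUlt
      have hsupfr := Submodule.finrank_sup_add_finrank_inf_eq Em Ep
      rw [hinfEmEp] at hsupfr
      have hbot0 : Module.finrank ℂ (⊥ : Submodule ℂ (V → ℂ)) = 0 := finrank_bot ℂ _
      have hUeq : Em ⊔ Ep = U := by
        apply Submodule.eq_of_le_of_finrank_le hsupU
        omega
      intro v h1 h2
      have hvU : v ∈ U := by
        rw [hU]
        exact Submodule.mem_inf.mpr
          ⟨(LinearMap.mem_ker).mpr h1, (LinearMap.mem_ker).mpr h2⟩
      rw [← hUeq] at hvU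
      exact hkillSup v hvU
  -- decomposition
  have hJJ : Jone ⬝ᵥ Jone = nC := by
    simp [dotProduct, hJone, hnC, hcard]
  have hσJ : σ ⬝ᵥ Jone = 0 := by rw [dotProduct_comm]; exact hσsum
  clear_value Jone σ
  have hdec : ∀ u : V → ℂ, MM *ᵥ u =
      ((Jone ⬝ᵥ u)/nC) • (MM *ᵥ Jone) + ((σ ⬝ᵥ u)/s₂) • (MM *ᵥ σ) := by
    intro u
    set w := u - ((Jone ⬝ᵥ u)/nC) • Jone - ((σ ⬝ᵥ u)/s₂) • σ with hw
    have h1 : Jone ⬝ᵥ w = 0 := by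
      rw [hw, dotProduct_sub, dotProduct_sub, dotProduct_smul,
        dotProduct_smul, hJJ, hσsum]
      simp only [smul_eq_mul]
      field_simp
      ring
    have h2 : σ ⬝ᵥ w = 0 := by
      rw [hw, dotProduct_sub, dotProduct_sub, dotProduct_smul,
        dotProduct_smul, hσJ, ← hs₂]
      simp only [smul_eq_mul]
      field_simp
      ring
    have h3 := hCLAIM w h1 h2
    rw [hw, Matrix.mulVec_sub, Matrix.mulVec_sub, Matrix.mulVec_smul, Matrix.mulVec_smul,
      sub_sub, sub_eq_zero] at h3
    exact h3
  have hMJ : MM *ᵥ Jone = S *ᵥ σ + c • Jone := by rw [hMMv, ← hσdef]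
  have hσSσ : σ ⬝ᵥ (S *ᵥ σ) = 0 := by
    have h := dot_mulVec_flip S σ σ
    rw [hSt, Matrix.neg_mulVec, neg_dotProduct] at h
    have h2 : (S *ᵥ σ) ⬝ᵥ σ = σ ⬝ᵥ (S *ᵥ σ) := dotProduct_comm _ _
    rw [h2] at h
    linear_combination h / 2
  have hJSσ : Jone ⬝ᵥ (S *ᵥ σ) = -s₂ := by
    rw [dot_mulVec_flip, hSt, Matrix.neg_mulVec, neg_dotProduct, ← hσdef, ← hs₂]
  have hq2 : σ ⬝ᵥ (MM *ᵥ Jone) = 0 := by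
    rw [hMJ, dotProduct_add, dotProduct_smul, hσSσ, hσJ]
    simp
  have hq1 : Jone ⬝ᵥ (MM *ᵥ Jone) = c * nC - s₂ := by
    rw [hMJ, dotProduct_add, dotProduct_smul, hJSσ, hJJ]
    simp only [smul_eq_mul]
    ring
  set p : ℂ := (c * nC - s₂)/nC with hp
  have hconjs₂ : (starRingEnd ℂ) s₂ = s₂ := by rw [hs₂z]; simp
  have hconjnC : (starRingEnd ℂ) nC = nC := by
    rw [hnC]
    exact map_natCast (starRingEnd ℂ) (2*d)
  have hconjp : (starRingEnd ℂ) p = p := by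
    rw [hp, map_div₀, map_sub, _root_.map_mul, hconjc, hconjs₂, hconjnC]
  clear_value p
  have hKEY1 : MM *ᵥ Jone = p • Jone := by
    set w1 := MM *ᵥ Jone - p • Jone with hw1d
    have h1 : Jone ⬝ᵥ w1 = 0 := by
      rw [hw1d, dotProduct_sub, dotProduct_smul, hq1, hJJ, hp]
      simp only [smul_eq_mul]
      field_simp
      ring
    have h2 : σ ⬝ᵥ w1 = 0 := by
      rw [hw1d, dotProduct_sub, dotProduct_smul, hq2, hσJ]
      simp
    have h3 := hCLAIM w1 h1 h2
    have hMMt : MMᵀ = MM := by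
      rw [hMM, Matrix.transpose_add, Matrix.transpose_smul, Matrix.transpose_one,
        Matrix.transpose_mul, hSt]
      rw [show ((-S) * (-S) : Matrix V V ℂ) = S * S by noncomm_ring]
    have h4 : w1 ⬝ᵥ w1 = 0 := by
      have e1 : w1 ⬝ᵥ (MM *ᵥ Jone) = 0 := by
        rw [dot_mulVec_flip, hMMt, h3, zero_dotProduct]
      have e2 : w1 ⬝ᵥ Jone = 0 := by rw [dotProduct_comm]; exact h1
      calc w1 ⬝ᵥ w1 = w1 ⬝ᵥ (MM *ᵥ Jone) - p • (w1 ⬝ᵥ Jone) := by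
            conv_lhs => rw [hw1d]
            rw [hw1d, dotProduct_sub, dotProduct_smul]
      _ = 0 := by rw [e1, e2, smul_zero, sub_zero]
    have hconjw1 : ∀ x, (starRingEnd ℂ) (w1 x) = w1 x := by
      intro x
      have e1 : w1 x = (S *ᵥ σ) x + c - p := by
        have e0 : (MM *ᵥ Jone) x = (S *ᵥ σ) x + c := by
          rw [hMJ]
          simp [hJone]
        rw [hw1d, Pi.sub_apply, e0, Pi.smul_apply, smul_eq_mul]
        simp only [hJone]
        ring
      rw [e1, map_sub, map_add, hconjc, hconjp]
      have e2 : (starRingEnd ℂ) ((S *ᵥ σ) x) = (S *ᵥ σ) x := by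
        simp only [Matrix.mulVec, dotProduct, map_sum, _root_.map_mul, hSreal, hconjσ]
      rw [e2]
    have h5 : ∀ x, w1 x = 0 := by
      have hre : ∀ x, (((w1 x).re : ℝ) : ℂ) = w1 x :=
        fun x => Complex.conj_eq_iff_re.mp (hconjw1 x)
      have h6 : ((∑ x, ((w1 x).re)^2 : ℝ) : ℂ) = 0 := by
        rw [← h4, dotProduct]
        push_cast
        apply Finset.sum_congr rfl
        intro x _
        rw [hre x]
        ring
      have h7 : ∑ x, ((w1 x).re)^2 = 0 := by exact_mod_cast h6
      intro x
      have h8 : ((w1 x).re)^2 = 0 :=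
        (Finset.sum_eq_zero_iff_of_nonneg (fun i _ => sq_nonneg ((w1 i).re))).mp h7 x
          (Finset.mem_univ x)
      have h9 : (w1 x).re = 0 := by
        nlinarith [sq_nonneg ((w1 x).re)]
      rw [← hre x, h9]
      simp
    have h10 : w1 = 0 := funext h5
    rw [hw1d, sub_eq_zero] at h10
    exact h10
  set ρ : ℂ := s₂ / nC with hρ
  have hpρ : p = c - ρ := by
    rw [hp, hρ, sub_div, mul_div_assoc, div_self hnC0, mul_one]
  clear_value ρ
  have hSσJ : S *ᵥ σ = (-ρ) • Jone := by
    have h1 := hKEY1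
    rw [hMJ, hpρ] at h1
    have h2 : S *ᵥ σ = (c - ρ) • Jone - c • Jone := by rw [← h1]; abel
    rw [h2, ← sub_smul]
    congr 1
    ring
  have hMσ : MM *ᵥ σ = (c - ρ) • σ := by
    rw [hMMv, hSσJ, Matrix.mulVec_smul, ← hσdef, ← add_smul]
    congr 1
    ring
  have hMJ2 : MM *ᵥ Jone = (c - ρ) • Jone := by rw [hKEY1, hpρ]
  have hENTRY : ∀ x y, MM x y = (c - ρ) * (1/nC + σ x * σ y / s₂) := by
    intro x y
    have h1 := hdec (Pi.single y 1)
    have h2 : Jone ⬝ᵥ Pi.single y 1 = 1 := by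
      rw [dotProduct_single]
      simp [hJone]
    have h3 : σ ⬝ᵥ Pi.single y 1 = σ y := by
      rw [dotProduct_single, mul_one]
    rw [h2, h3, hMJ2, hMσ, Matrix.mulVec_single] at h1
    have h4 := congrFun h1 x
    simp only [Pi.add_apply, Pi.smul_apply, smul_eq_mul, hJone, mul_one, op_smul_eq_mul,
      Matrix.col_apply] at h4
    rw [h4]
    field_simp
  have hSSdiag : ∀ x, (S * S) x x = -(nC - 1) := by
    intro x
    rw [Matrix.mul_apply]
    have h1 : ∀ y, S x y * S y x = -(S x y)^2 := by
      intro y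
      rw [hSskew]
      ring
    rw [Finset.sum_congr rfl (fun y _ => h1 y),
      ← Finset.add_sum_erase _ _ (Finset.mem_univ x), hSdiag]
    have h2 : ∀ y ∈ Finset.univ.erase x, -(S x y)^2 = -1 := by
      intro y hy
      rcases hSpm x y (Ne.symm (Finset.ne_of_mem_erase hy)) with h | h <;> rw [h] <;> ring
    rw [Finset.sum_congr rfl h2, Finset.sum_const, Finset.card_erase_of_mem (Finset.mem_univ x),
      Finset.card_univ, hcard, nsmul_eq_mul, hnC]
    push_cast [Nat.cast_sub (by omega : 1 ≤ 2*d)]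
    ring
  have hDIAG : ∀ x, c - (nC - 1) = (c - ρ) * (1/nC + σ x * σ x / s₂) := by
    intro x
    have h1 := hENTRY x x
    rw [hMM, Matrix.add_apply, Matrix.smul_apply, Matrix.one_apply_eq, smul_eq_mul, mul_one,
      hSSdiag] at h1
    linear_combination h1
  by_cases hcase : c = ρ
  · have hc0 : c - ρ = 0 := by rw [hcase]; ring
    have hMM0 : ∀ x y, MM x y = 0 := by
      intro x y
      rw [hENTRY, hc0, zero_mul]
    have hc1 : c = nC - 1 := by
      have h1 := hDIAG (Classical.arbitrary V)
      rw [hc0, zero_mul] at h1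
      linear_combination h1
    ext x y
    have h2 := hMM0 x y
    rw [hMM, Matrix.add_apply, Matrix.smul_apply, smul_eq_mul] at h2
    rw [Matrix.smul_apply, smul_eq_mul]
    rw [hc1] at h2
    rw [hnC] at h2 ⊢
    linear_combination h2
  · exfalso
    have hcρ : c - ρ ≠ 0 := sub_ne_zero.2 hcase
    set x₀ := Classical.arbitrary V with hx₀
    set r := σ x₀ with hr
    have hr0 : r ≠ 0 := by rw [hr]; exact hσ0 x₀
    clear_value r
    have hsq : ∀ x, σ x * σ x = r * r := by
      intro x
      have h1 := hDIAG x
      have h2 := hDIAG x₀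
      rw [← hr] at h2
      have h3 : (c - ρ) * (σ x * σ x / s₂) = (c - ρ) * (r * r / s₂) := by
        linear_combination h2 - h1
      have h4 : σ x * σ x / s₂ = r * r / s₂ := mul_left_cancel₀ hcρ h3
      have h5 := congrArg (fun z => z * s₂) h4
      simpa [div_mul_cancel₀ _ hs₂0] using h5
    have hpm : ∀ x, σ x = r ∨ σ x = -r := by
      intro x
      have h1 : (σ x - r) * (σ x + r) = 0 := by linear_combination hsq x
      rcases mul_eq_zero.mp h1 with h | h
      · left; linear_combination h
      · right; linear_combination h
    -- indicator sums
    have hind : ∀ x, σ x + r = if σ x = r then 2*r else 0 := by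
      intro x
      rcases hpm x with h | h
      · rw [if_pos h, h]; ring
      · have hne : ¬ (σ x = r) := by
          rw [h]
          intro h2
          exact hr0 (by linear_combination (-1/2 : ℂ) * h2)
        rw [if_neg hne, h]; ring
    set PC : ℕ := (Finset.univ.filter (fun x => σ x = r)).card with hPC
    have hsumσ : ∑ x, σ x = 0 := by
      have h := hσsum
      rw [dotProduct] at h
      simpa [hJone] using h
    have hPCsum : ∑ x, (σ x + r) = 2*r*(PC:ℂ) := by
      rw [Finset.sum_congr rfl (fun x _ => hind x)]
      have e1 : ∀ x : V, (if σ x = r then (2*r:ℂ) else 0) = 2*r * (if σ x = r then (1:ℂ) else 0) := by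
        intro x
        by_cases h : σ x = r <;> simp [h]
      rw [Finset.sum_congr rfl (fun x _ => e1 x), ← Finset.mul_sum, Finset.sum_boole, hPC]
    have hPCd : PC = d := by
      have e1 : ∑ x, (σ x + r) = nC * r := by
        rw [Finset.sum_add_distrib, hsumσ, zero_add, Finset.sum_const, Finset.card_univ,
          hcard, nsmul_eq_mul, hnC]
      have e3 : nC * r = 2*r*(PC:ℂ) := e1.symm.trans hPCsum
      have e4 : (nC - 2*(PC:ℂ)) * r = 0 := by linear_combination e3
      have e5 : nC = 2*(PC:ℂ) := by
        have h6 := (mul_eq_zero.mp e4).resolve_right hr0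
        linear_combination h6
      have e6 : ((2*d : ℕ):ℂ) = ((2*PC : ℕ):ℂ) := by
        rw [← hnC]
        push_cast
        linear_combination e5
      have e7 : 2*d = 2*PC := by exact_mod_cast e6
      omega
    have hs₂r : s₂ = nC * (r * r) := by
      rw [hs₂, dotProduct, Finset.sum_congr rfl (fun x _ => hsq x), Finset.sum_const,
        Finset.card_univ, hcard, nsmul_eq_mul, hnC]
    have hρr : ρ = r * r := by
      have h1 : ρ * nC = s₂ := by rw [hρ]; field_simp
      rw [hs₂r] at h1
      exact mul_right_cancel₀ hnC0 (h1.trans (mul_comm nC (r*r)))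
    have hk1 : (S *ᵥ σ) x₀ = -(r*r) := by
      rw [hSσJ]
      simp only [Pi.smul_apply, smul_eq_mul, hJone, hρr]
      ring
    have hk2 : (S *ᵥ σ) x₀ = ∑ y, S x₀ y * σ y := by
      simp [Matrix.mulVec, dotProduct]
    have hSall : ∑ y, S x₀ y = r := by
      rw [← hσrow x₀]
      exact hr.symm
    have hkey2 : ∑ y, S x₀ y * (σ y + r) = 0 := by
      have e0 : ∀ y, S x₀ y * (σ y + r) = S x₀ y * σ y + S x₀ y * r := fun y => by ring
      rw [Finset.sum_congr rfl (fun y _ => e0 y), Finset.sum_add_distrib, ← Finset.sum_mul,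
        hSall, ← hk2, hk1]
      ring
    set SPc : ℂ := ∑ y, (if σ y = r then S x₀ y else 0) with hSPc
    have hkey3 : ∑ y, S x₀ y * (σ y + r) = 2*r*SPc := by
      have e1 : ∀ y, S x₀ y * (σ y + r) = 2*r*(if σ y = r then S x₀ y else 0) := by
        intro y
        rw [hind y]
        by_cases h : σ y = r <;> simp [h] <;> ring
      rw [Finset.sum_congr rfl (fun y _ => e1 y), ← Finset.mul_sum, hSPc]
    have hSPc0 : SPc = 0 := by
      have h1 : 2*r*SPc = 0 := by rw [← hkey3, hkey2]
      rcases mul_eq_zero.mp h1 with h | h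
      · exfalso
        rcases mul_eq_zero.mp h with h2 | h2
        · exact two_ne_zero h2
        · exact hr0 h2
      · exact h
    have hσx₀ : σ x₀ = r := hr.symm
    set KN : ℕ := ((Finset.univ.erase x₀).filter (fun y => σ y = r ∧ A x₀ y = 1)).card with hKN
    have hsplit3 : SPc = ∑ y ∈ Finset.univ.erase x₀, (if σ y = r then S x₀ y else 0) := by
      rw [hSPc, ← Finset.add_sum_erase _ _ (Finset.mem_univ x₀), if_pos hσx₀, hSdiag, zero_add]
    have e2 : ∀ y ∈ Finset.univ.erase x₀, (if σ y = r then S x₀ y else 0)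
        = 2*(if (σ y = r ∧ A x₀ y = 1) then (1:ℂ) else 0) - (if σ y = r then (1:ℂ) else 0) := by
      intro y hy
      have hne := Ne.symm (Finset.ne_of_mem_erase hy)
      by_cases h : σ y = r
      · rw [if_pos h]
        rcases hA01 x₀ y with h0 | h1
        · have hS1 : S x₀ y = -1 := by rw [hSoff x₀ y hne, h0]; ring
          rw [hS1, if_neg (by rintro ⟨_, hA1⟩; rw [h0] at hA1; exact zero_ne_one hA1), if_pos h]
          ring
        · have hS1 : S x₀ y = 1 := by rw [hSoff x₀ y hne, h1]; ring
          rw [hS1, if_pos ⟨h, h1⟩, if_pos h]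
          ring
      · rw [if_neg h, if_neg (by rintro ⟨h2, _⟩; exact h h2), if_neg h]
        ring
    have e3 : ∑ y ∈ Finset.univ.erase x₀, (if (σ y = r ∧ A x₀ y = 1) then (1:ℂ) else 0)
        = (KN:ℂ) := by
      rw [Finset.sum_boole, hKN]
    have e4 : ∑ y ∈ Finset.univ.erase x₀, (if σ y = r then (1:ℂ) else 0) = (PC:ℂ) - 1 := by
      have f1 : ∑ y, (if σ y = r then (1:ℂ) else 0) = (PC:ℂ) := by
        rw [Finset.sum_boole, hPC]
      have f2 := Finset.add_sum_erase Finset.univ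
        (fun y => if σ y = r then (1:ℂ) else 0) (Finset.mem_univ x₀)
      simp only [if_pos hσx₀] at f2
      rw [f1] at f2
      linear_combination f2
    have hSPcsplit : SPc = 2*(KN:ℂ) - ((PC:ℂ) - 1) := by
      rw [hsplit3, Finset.sum_congr rfl e2, Finset.sum_sub_distrib, ← Finset.mul_sum, e3, e4]
    have hfinal : 2*(KN:ℂ) = (d:ℂ) - 1 := by
      have h := hSPcsplit
      rw [hSPc0, hPCd] at h
      linear_combination -h
    have hfinal2 : 2*(KN:ℂ) = ((d - 1 : ℕ):ℂ) := by
      rw [Nat.cast_sub (by omega : 1 ≤ d)]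
      push_cast
      linear_combination hfinal
    have hnat : 2*KN = d - 1 := by exact_mod_cast hfinal2
    obtain ⟨m, hm⟩ := heven
    omega

/-- for even `d`: any 2-code in `Ω(d)` of size `2d` yields a skew Hadamard
matrix `I + A − Aᵀ`; conversely a skew Hadamard matrix `H` of order `2d` gives a tournament
`A = (H + J)/2 − I` representable in `Ω(d)`, hence a 2-code of size `2d` in `Ω(d)`. -/
theorem twoCode_tight_even_skewHadamard {d : ℕ} (hd : 0 < d) (heven : Even d) :
    (∀ (X : Finset (EuclideanSpace ℂ (Fin d))) (α : ℂ),
      IsTwoCode X α → 0 < α.im → X.card = 2 * d →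
        IsSkewHadamard ((1 : Matrix {x // x ∈ X} {x // x ∈ X} ℂ)
          + codeAdj X α - (codeAdj X α)ᵀ)) ∧
    (∀ H : Matrix (Fin (2 * d)) (Fin (2 * d)) ℂ, IsSkewHadamard H →
      Representable ((1 / 2 : ℂ) • (H + Matrix.of (fun _ _ => (1 : ℂ))) - 1) d ∧
      ∃ (X : Finset (EuclideanSpace ℂ (Fin d))) (α : ℂ),
        IsTwoCode X α ∧ X.card = 2 * d) := by
  constructor
  · intro X α htc him hXcard
    obtain ⟨him0, hnorm, hset⟩ := htc
    have hcardV : Fintype.card {x // x ∈ X} = 2 * d := by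
      rw [Fintype.card_coe, hXcard]
    set V := {x // x ∈ X} with hV
    set A : Matrix V V ℂ := codeAdj X α with hAdef
    set a : ℝ := α.re with ha
    set b : ℝ := α.im with hb
    have hbpos : 0 < b := him
    have hα : (a:ℂ) + (b:ℂ)*Complex.I = α := Complex.re_add_im α
    have hconjα : (starRingEnd ℂ) α = (a:ℂ) - (b:ℂ)*Complex.I := by
      rw [← hα, map_add, _root_.map_mul, Complex.conj_ofReal, Complex.conj_ofReal,
        Complex.conj_I]
      ring
    have hconjne : (starRingEnd ℂ) α ≠ α := by
      intro h
      have h2 := congrArg Complex.im h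
      rw [Complex.conj_im] at h2
      have : α.im = 0 := by linarith
      exact him0 this
    have hpair : ∀ x y : V, x ≠ y →
        (inner ℂ (x : EuclideanSpace ℂ (Fin d)) (y : EuclideanSpace ℂ (Fin d)) : ℂ) = α ∨
        (inner ℂ (x : EuclideanSpace ℂ (Fin d)) (y : EuclideanSpace ℂ (Fin d)) : ℂ)
          = (starRingEnd ℂ) α := by
      intro x y hxy
      have hne : (x : EuclideanSpace ℂ (Fin d)) ≠ (y : EuclideanSpace ℂ (Fin d)) :=
        fun h => hxy (Subtype.ext h)
      have hmem : (inner ℂ (x : EuclideanSpace ℂ (Fin d)) (y : EuclideanSpace ℂ (Fin d)) : ℂ) ∈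
          {z : ℂ | ∃ u ∈ X, ∃ w ∈ X, u ≠ w ∧ (inner ℂ u w : ℂ) = z} :=
        ⟨x.1, x.2, y.1, y.2, hne, rfl⟩
      rw [hset] at hmem
      exact hmem
    have hAoff : ∀ x y : V, A x y = if ((x : EuclideanSpace ℂ (Fin d)) ≠ y ∧
        (inner ℂ (x : EuclideanSpace ℂ (Fin d)) (y : EuclideanSpace ℂ (Fin d)) : ℂ) = α)
        then 1 else 0 := by
      intro x y
      rw [hAdef]
      rfl
    have hA01 : ∀ x y : V, A x y = 0 ∨ A x y = 1 := by
      intro x y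
      rw [hAoff]
      by_cases h : ((x : EuclideanSpace ℂ (Fin d)) ≠ y ∧
        (inner ℂ (x : EuclideanSpace ℂ (Fin d)) (y : EuclideanSpace ℂ (Fin d)) : ℂ) = α)
      · right; rw [if_pos h]
      · left; rw [if_neg h]
    have hAdiag : ∀ x : V, A x x = 0 := by
      intro x
      rw [hAoff, if_neg]
      rintro ⟨h, _⟩
      exact h rfl
    have hinnerflip : ∀ x y : V,
        (inner ℂ (y : EuclideanSpace ℂ (Fin d)) (x : EuclideanSpace ℂ (Fin d)) : ℂ)
        = (starRingEnd ℂ) (inner ℂ (x : EuclideanSpace ℂ (Fin d)) (y : EuclideanSpace ℂ (Fin d)) : ℂ) :=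
      fun x y => (inner_conj_symm (𝕜 := ℂ) _ _).symm
    have hAval : ∀ x y : V, x ≠ y →
        ((inner ℂ (x : EuclideanSpace ℂ (Fin d)) (y : EuclideanSpace ℂ (Fin d)) : ℂ) = α
          ∧ A x y = 1 ∧ A y x = 0) ∨
        ((inner ℂ (x : EuclideanSpace ℂ (Fin d)) (y : EuclideanSpace ℂ (Fin d)) : ℂ)
          = (starRingEnd ℂ) α ∧ A x y = 0 ∧ A y x = 1) := by
      intro x y hxy
      have hne : (x : EuclideanSpace ℂ (Fin d)) ≠ (y : EuclideanSpace ℂ (Fin d)) :=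
        fun h => hxy (Subtype.ext h)
      rcases hpair x y hxy with h | h
      · left
        refine ⟨h, ?_, ?_⟩
        · rw [hAoff, if_pos ⟨hne, h⟩]
        · rw [hAoff, if_neg]
          rintro ⟨_, h2⟩
          rw [hinnerflip x y, h] at h2
          exact hconjne h2
      · right
        refine ⟨h, ?_, ?_⟩
        · rw [hAoff, if_neg]
          rintro ⟨_, h2⟩
          rw [h] at h2
          exact hconjne h2
        · have h9 : (inner ℂ (y : EuclideanSpace ℂ (Fin d)) (x : EuclideanSpace ℂ (Fin d)) : ℂ)
              = α := by
            rw [hinnerflip x y, h]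
            simp
          rw [hAoff, if_pos ⟨Ne.symm hne, h9⟩]
    have hAsum : ∀ x y : V, x ≠ y → A x y + A y x = 1 := by
      intro x y hxy
      rcases hAval x y hxy with ⟨_, h1, h2⟩ | ⟨_, h1, h2⟩ <;> rw [h1, h2] <;> ring
    -- Gram matrix
    set G : Matrix V V ℂ :=
      Matrix.of (fun x y : V =>
        (inner ℂ (x : EuclideanSpace ℂ (Fin d)) (y : EuclideanSpace ℂ (Fin d)) : ℂ)) with hGdef
    have hGdiag : ∀ x : V, G x x = 1 := by
      intro x
      rw [hGdef]
      show (inner ℂ (x : EuclideanSpace ℂ (Fin d)) (x : EuclideanSpace ℂ (Fin d)) : ℂ) = 1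
      rw [inner_self_eq_norm_sq_to_K, hnorm x.1 x.2]
      norm_num
    have hGoff : ∀ x y : V, x ≠ y → G x y =
        ((a:ℂ) + (b:ℂ)*Complex.I) * A x y + ((a:ℂ) - (b:ℂ)*Complex.I) * A y x := by
      intro x y hxy
      have hGxy : G x y =
          (inner ℂ (x : EuclideanSpace ℂ (Fin d)) (y : EuclideanSpace ℂ (Fin d)) : ℂ) := rfl
      rcases hAval x y hxy with ⟨h0, h1, h2⟩ | ⟨h0, h1, h2⟩ <;>
        rw [hGxy, h0, h1, h2]
      · rw [hα]; ring
      · rw [hconjα]; ring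
    have hab : a^2 + b^2 ≤ 1 := by
      have h2d : 1 < X.card := by omega
      obtain ⟨u, hu, w, hw, huw⟩ := Finset.one_lt_card.mp h2d
      have hmem : (inner ℂ u w : ℂ) ∈
          {z : ℂ | ∃ u ∈ X, ∃ w ∈ X, u ≠ w ∧ (inner ℂ u w : ℂ) = z} := ⟨u, hu, w, hw, huw, rfl⟩
      rw [hset] at hmem
      have hle : ‖(inner ℂ u w : ℂ)‖ ≤ 1 := by
        have := norm_inner_le_norm (𝕜 := ℂ) u w
        rwa [hnorm u hu, hnorm w hw, mul_one] at this
      have habs : ‖α‖ ≤ 1 := by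
        have hmem' : (inner ℂ u w : ℂ) = α ∨ (inner ℂ u w : ℂ) = (starRingEnd ℂ) α := hmem
        rcases hmem' with h | h
        · rw [← h]; exact hle
        · have h2 : ‖(starRingEnd ℂ) α‖ ≤ 1 := by rw [← h]; exact hle
          rwa [RCLike.norm_conj] at h2
      have h3 : ‖α‖^2 ≤ 1 := by nlinarith [norm_nonneg α]
      rw [Complex.sq_norm, Complex.normSq_apply] at h3
      calc a^2 + b^2 = α.re * α.re + α.im * α.im := by rw [ha, hb]; ring
      _ ≤ 1 := h3
    have hrank : G.rank ≤ d := by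
      set B : Matrix (Fin d) V ℂ :=
        Matrix.of (fun i (x : V) => (x : EuclideanSpace ℂ (Fin d)) i) with hB
      have hGB : G = Bᴴ * B := by
        ext x y
        rw [Matrix.mul_apply, hGdef]
        show (inner ℂ (x : EuclideanSpace ℂ (Fin d)) (y : EuclideanSpace ℂ (Fin d)) : ℂ) = _
        rw [PiLp.inner_apply]
        apply Finset.sum_congr rfl
        intro i _
        rw [Matrix.conjTranspose_apply, hB]
        simp only [Matrix.of_apply, RCLike.inner_apply]
        exact mul_comm _ _
      calc G.rank = (Bᴴ * B).rank := by rw [hGB]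
      _ ≤ B.rank := Matrix.rank_mul_le_right _ _
      _ ≤ Fintype.card (Fin d) := Matrix.rank_le_card_height B
      _ = d := Fintype.card_fin d
    have hSS := key_SS hd heven hcardV A hA01 hAdiag hAsum a b hbpos hab G hGdiag hGoff hrank
    -- conclude skew Hadamard
    refine ⟨?_, ?_, ?_⟩
    · intro i j
      by_cases h : i = j
      · subst h
        left
        simp [Matrix.add_apply, Matrix.sub_apply, Matrix.one_apply_eq, hAdiag]
      · rcases hAval i j h with ⟨_, h1, h2⟩ | ⟨_, h1, h2⟩
        · left
          simp only [Matrix.sub_apply, Matrix.add_apply, Matrix.one_apply_ne h,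
            Matrix.transpose_apply, h1, h2]
          ring
        · right
          simp only [Matrix.sub_apply, Matrix.add_apply, Matrix.one_apply_ne h,
            Matrix.transpose_apply, h1, h2]
          ring
    · have ht : ((1 : Matrix V V ℂ) + A - Aᵀ)ᵀ = 1 + Aᵀ - A := by
        rw [Matrix.transpose_sub, Matrix.transpose_add, Matrix.transpose_one,
          Matrix.transpose_transpose]
      rw [ht, two_smul]
      abel
    · have ht : ((1 : Matrix V V ℂ) + A - Aᵀ)ᵀ = 1 + Aᵀ - A := by
        rw [Matrix.transpose_sub, Matrix.transpose_add, Matrix.transpose_one,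
          Matrix.transpose_transpose]
      rw [ht]
      have hexp : ((1 : Matrix V V ℂ) + A - Aᵀ) * (1 + Aᵀ - A)
          = 1 - (A - Aᵀ) * (A - Aᵀ) := by
          simp only [add_mul, mul_add, sub_mul, mul_sub, one_mul, mul_one]; abel
      rw [hexp, hSS, hcardV]
      rw [neg_smul, sub_neg_eq_add, sub_smul, one_smul]
      abel
  · intro H hH
    exact dir2 hd H hH
end
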